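/- arXiv:1801.07541 — 7 statements merged into one kernel-verified Lean document; each statement's English description precedes it below -/
import Mathlib

section
/- Let f : (0,1) → (0,1) be a function with f(x) < x for all x, let ε ∈ (0,1) with 1/ε ∈ ℕ, and let k be a positive integer; set T = 2(1/ε)^k. Let W and OPT be positive integers and let R be a finite family of rectangles with w_i ≤ W, h_i ≤ OPT for all i and total area a(R) ≤ W·OPT. Define y_1 = ε and y_{j+1} = f(y_j) for j = 1,…,T, and x_j = ε·y_j/12. For each j ∈ {1,…,T} let W_j = {R_i ∈ R : x_{j+1}·W ≤ w_i < x_j·W} and H_j = {R_i ∈ R : y_{j+1}·OPT ≤ h_i < y_j·OPT}. Then there exists j̄ ∈ {1,…,T} such that a(W_{j̄}) + a(H_{j̄}) ≤ ε^k·OPT·W; in particular a(W_{j̄} ∪ H_{j̄}) ≤ ε^k·OPT·W. -/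
open scoped Classical

/-- Parameter-selection lemma (Lemma 2.1): there is an index `j̄ ∈ {1,…,T}` such that the
rectangles whose widths lie in `[x_{j̄+1}·W, x_{j̄}·W)` or whose heights lie in
`[y_{j̄+1}·OPT, y_{j̄}·OPT)` have total area at most `ε^k·OPT·W`. -/
theorem medium_rectangles_small_area
    (f : ℝ → ℝ) (hf : ∀ t ∈ Set.Ioo (0 : ℝ) 1, f t ∈ Set.Ioo (0 : ℝ) 1 ∧ f t < t)
    (ε : ℝ) (hε : ε ∈ Set.Ioo (0 : ℝ) 1)
    (m : ℕ) (hm : (m : ℝ) = 1 / ε)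
    (k : ℕ) (hk : 1 ≤ k)
    (T : ℕ) (hT : T = 2 * m ^ k)
    (W OPT : ℕ) (hW : 0 < W) (hOPT : 0 < OPT)
    (ι : Type*) [Fintype ι] (w h : ι → ℕ)
    (hwh : ∀ i, 0 < w i ∧ w i ≤ W ∧ 0 < h i ∧ h i ≤ OPT)
    (harea : (∑ i, (w i : ℝ) * h i) ≤ (W : ℝ) * OPT)
    (y : ℕ → ℝ) (hy1 : y 1 = ε)
    (hyrec : ∀ j, 1 ≤ j → j ≤ T → y (j + 1) = f (y j))
    (x : ℕ → ℝ) (hx : ∀ j, x j = ε * y j / 12) :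
    ∃ j, 1 ≤ j ∧ j ≤ T ∧
      ((∑ i ∈ Finset.univ.filter
          (fun i => x (j + 1) * W ≤ (w i : ℝ) ∧ (w i : ℝ) < x j * W), (w i : ℝ) * h i)
        + (∑ i ∈ Finset.univ.filter
          (fun i => y (j + 1) * OPT ≤ (h i : ℝ) ∧ (h i : ℝ) < y j * OPT), (w i : ℝ) * h i)
        ≤ ε ^ k * OPT * W) ∧
      ((∑ i ∈ Finset.univ.filter
          (fun i => (x (j + 1) * W ≤ (w i : ℝ) ∧ (w i : ℝ) < x j * W) ∨
            (y (j + 1) * OPT ≤ (h i : ℝ) ∧ (h i : ℝ) < y j * OPT)), (w i : ℝ) * h i)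
        ≤ ε ^ k * OPT * W) := by
  have hε0 : 0 < ε := hε.1
  have hεne : ε ≠ 0 := ne_of_gt hε0
  have hmε : (m : ℝ) * ε = 1 := by rw [hm]; field_simp
  have hm0 : 0 < m := by
    by_contra hc
    push_neg at hc
    interval_cases m
    simp at hmε
  have hT0 : 0 < T := by
    rw [hT]; positivity
  -- y j ∈ (0,1) for 1 ≤ j ≤ T+1
  have ymem : ∀ j, 1 ≤ j → j ≤ T + 1 → y j ∈ Set.Ioo (0 : ℝ) 1 := by
    intro j
    induction j with
    | zero => omega
    | succ n ih =>
      intro h1 h2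
      rcases Nat.eq_or_lt_of_le h1 with heq | hlt
      · rw [← heq]; rw [hy1]; exact hε
      · have hn1 : 1 ≤ n := by omega
        have hnT : n ≤ T := by omega
        rw [hyrec n hn1 hnT]
        exact (hf (y n) (ih hn1 (by omega))).1
  have ydec : ∀ j, 1 ≤ j → j ≤ T → y (j + 1) < y j := by
    intro j h1 h2
    rw [hyrec j h1 h2]
    exact (hf (y j) (ymem j h1 (by omega))).2
  have yanti : ∀ a b, 1 ≤ a → a ≤ b → b ≤ T + 1 → y b ≤ y a := by
    intro a b h1 hab
    induction b with
    | zero => omega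
    | succ n ih =>
      intro hb
      rcases Nat.eq_or_lt_of_le hab with heq | hlt
      · rw [heq]
      · have : y (n + 1) < y n := ydec n (by omega) (by omega)
        exact this.le.trans (ih (by omega) (by omega))
  have xanti : ∀ a b, 1 ≤ a → a ≤ b → b ≤ T + 1 → x b ≤ x a := by
    intro a b h1 hab hb
    rw [hx a, hx b]
    have := yanti a b h1 hab hb
    have h12 : (0:ℝ) < 12 := by norm_num
    gcongr
  -- areas
  set a : ι → ℝ := fun i => (w i : ℝ) * h i with ha
  have hanon : ∀ i, 0 ≤ a i := fun i => by positivity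
  set pW : ℕ → ι → Prop := fun j i => x (j + 1) * W ≤ (w i : ℝ) ∧ (w i : ℝ) < x j * W with hpW
  set pH : ℕ → ι → Prop := fun j i => y (j + 1) * OPT ≤ (h i : ℝ) ∧ (h i : ℝ) < y j * OPT with hpH
  set AW : ℕ → Finset ι := fun j => Finset.univ.filter (pW j) with hAW
  set AH : ℕ → Finset ι := fun j => Finset.univ.filter (pH j) with hAH
  have hWnn : (0:ℝ) ≤ W := Nat.cast_nonneg W
  have hOnn : (0:ℝ) ≤ OPT := Nat.cast_nonneg OPT
  -- pairwise disjointness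
  have hdW0 : ∀ j j', 1 ≤ j → j < j' → j' ≤ T → Disjoint (AW j) (AW j') := by
    intro j j' h1 h2 h3
    rw [Finset.disjoint_left]
    intro i hi hi'
    simp only [hAW, Finset.mem_filter] at hi hi'
    have h4 : x j' ≤ x (j + 1) := xanti (j+1) j' (by omega) (by omega) (by omega)
    have : (w i : ℝ) < (w i : ℝ) :=
      lt_of_lt_of_le hi'.2.2 (le_trans (by gcongr) hi.2.1)
    exact absurd this (lt_irrefl _)
  have hdH0 : ∀ j j', 1 ≤ j → j < j' → j' ≤ T → Disjoint (AH j) (AH j') := by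
    intro j j' h1 h2 h3
    rw [Finset.disjoint_left]
    intro i hi hi'
    simp only [hAH, Finset.mem_filter] at hi hi'
    have h4 : y j' ≤ y (j + 1) := yanti (j+1) j' (by omega) (by omega) (by omega)
    have : (h i : ℝ) < (h i : ℝ) :=
      lt_of_lt_of_le hi'.2.2 (le_trans (by gcongr) hi.2.1)
    exact absurd this (lt_irrefl _)
  have hdW : (↑(Finset.Icc 1 T) : Set ℕ).PairwiseDisjoint AW := by
    intro j hj j' hj' hne
    simp only [Finset.coe_Icc, Set.mem_Icc] at hj hj'
    rcases lt_or_gt_of_ne hne with hlt | hgt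
    · exact hdW0 j j' hj.1 hlt hj'.2
    · exact (hdW0 j' j hj'.1 hgt hj.2).symm
  have hdH : (↑(Finset.Icc 1 T) : Set ℕ).PairwiseDisjoint AH := by
    intro j hj j' hj' hne
    simp only [Finset.coe_Icc, Set.mem_Icc] at hj hj'
    rcases lt_or_gt_of_ne hne with hlt | hgt
    · exact hdH0 j j' hj.1 hlt hj'.2
    · exact (hdH0 j' j hj'.1 hgt hj.2).symm
  -- total sum bounds
  have sumbound : ∀ (A : ℕ → Finset ι),
      (↑(Finset.Icc 1 T) : Set ℕ).PairwiseDisjoint A →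
      (∑ j ∈ Finset.Icc 1 T, ∑ i ∈ A j, a i) ≤ (W : ℝ) * OPT := by
    intro A hd
    rw [← Finset.sum_biUnion hd]
    refine le_trans (Finset.sum_le_sum_of_subset_of_nonneg (Finset.subset_univ _)
      (fun i _ _ => hanon i)) harea
  have hTsum : (∑ j ∈ Finset.Icc 1 T, ((∑ i ∈ AW j, a i) + (∑ i ∈ AH j, a i)))
      ≤ ∑ j ∈ Finset.Icc 1 T, ε ^ k * OPT * W := by
    rw [Finset.sum_add_distrib, Finset.sum_const, Nat.card_Icc]
    have hTc : T + 1 - 1 = T := by omega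
    rw [hTc]
    have h2 : (T : ℝ) * (ε ^ k * OPT * W) = 2 * (W * OPT) := by
      rw [hT]
      push_cast
      have : ((m:ℝ) ^ k * ε ^ k) = 1 := by rw [← mul_pow, hmε, one_pow]
      calc 2 * (m:ℝ) ^ k * (ε ^ k * OPT * W) = 2 * ((m:ℝ)^k * ε^k) * (OPT * W) := by ring
        _ = 2 * (W * OPT) := by rw [this]; ring
    rw [nsmul_eq_mul, h2]
    have b1 := sumbound AW hdW
    have b2 := sumbound AH hdH
    linarith
  have hne : (Finset.Icc 1 T).Nonempty := by
    rw [Finset.nonempty_Icc]; omega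
  obtain ⟨j, hj, hjle⟩ := Finset.exists_le_of_sum_le hne hTsum
  simp only [Finset.mem_Icc] at hj
  refine ⟨j, hj.1, hj.2, hjle, ?_⟩
  -- union bound
  have hunion : (∑ i ∈ Finset.univ.filter (fun i => pW j i ∨ pH j i), a i)
      ≤ (∑ i ∈ AW j, a i) + (∑ i ∈ AH j, a i) := by
    rw [Finset.filter_or]
    have := Finset.sum_union_inter (s₁ := AW j) (s₂ := AH j) (f := a)
    have hint : (0:ℝ) ≤ ∑ i ∈ AW j ∩ AH j, a i := Finset.sum_nonneg fun i _ => hanon i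
    linarith
  exact hunion.trans hjle
end

section
/- Let W be a positive integer and let R be a finite family of rectangles, each of width w_i ≤ W and positive integer height h_i. Then there exists a feasible packing of all rectangles of R into the strip of width W whose height max_i (y_i + h_i) is at most h_max(R) + 2·a(R)/W. -/
open scoped Classical

/-- Open axis-aligned rectangles `(x₁, x₁+w₁) × (y₁, y₁+h₁)` and `(x₂, x₂+w₂) × (y₂, y₂+h₂)`
are disjoint. -/
def RectDisjoint (x₁ y₁ w₁ h₁ x₂ y₂ w₂ h₂ : ℕ) : Prop :=
  x₁ + w₁ ≤ x₂ ∨ x₂ + w₂ ≤ x₁ ∨ y₁ + h₁ ≤ y₂ ∨ y₂ + h₂ ≤ y₁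

namespace NFDHAux

lemma rectDisjoint_symm {x₁ y₁ w₁ h₁ x₂ y₂ w₂ h₂ : ℕ}
    (h : RectDisjoint x₁ y₁ w₁ h₁ x₂ y₂ w₂ h₂) :
    RectDisjoint x₂ y₂ w₂ h₂ x₁ y₁ w₁ h₁ := by
  unfold RectDisjoint at *; tauto

/-- NFDH core: place rectangles on shelves. `x` is the current cursor, `y` the base of the
current shelf, `sh` the height of the current shelf. -/
def packAux (W : ℕ) : ℕ → ℕ → ℕ → List (ℕ × ℕ) → List (ℕ × ℕ)
  | _, _, _, [] => []
  | x, y, sh, r :: rs =>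
    if x + r.1 ≤ W then (x, y) :: packAux W (x + r.1) y sh rs
    else (0, y + sh) :: packAux W r.1 (y + sh) r.2 rs

def larea : List (ℕ × ℕ) → ℕ
  | [] => 0
  | r :: rs => r.1 * r.2 + larea rs

def hd2 : List (ℕ × ℕ) → ℕ
  | [] => 0
  | r :: _ => r.2

lemma hd2_le {r : ℕ × ℕ} {rs : List (ℕ × ℕ)}
    (hp : (r :: rs).Pairwise (fun a b => b.2 ≤ a.2)) : hd2 rs ≤ r.2 := by
  cases rs with
  | nil => exact Nat.zero_le _
  | cons s t => exact (List.pairwise_cons.mp hp).1 s (by simp)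

lemma packAux_spec (W : ℕ) :
    ∀ (ℓ : List (ℕ × ℕ)) (x y sh : ℕ),
      (∀ r ∈ ℓ, r.1 ≤ W) → (∀ r ∈ ℓ, r.2 ≤ sh) →
      ℓ.Pairwise (fun r s => s.2 ≤ r.2) →
      (packAux W x y sh ℓ).length = ℓ.length ∧
      (∀ p ∈ (packAux W x y sh ℓ).zip ℓ, p.1.1 + p.2.1 ≤ W) ∧
      (∀ p ∈ (packAux W x y sh ℓ).zip ℓ, (p.1.2 = y ∧ x ≤ p.1.1) ∨ y + sh ≤ p.1.2) ∧
      (∀ p ∈ (packAux W x y sh ℓ).zip ℓ,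
        W * (p.1.2 + p.2.2) ≤ W * (y + sh) + 2 * larea ℓ + x * hd2 ℓ) ∧
      ((packAux W x y sh ℓ).zip ℓ).Pairwise
        (fun p q => RectDisjoint p.1.1 p.1.2 p.2.1 p.2.2 q.1.1 q.1.2 q.2.1 q.2.2) := by
  intro ℓ
  induction ℓ with
  | nil => intro x y sh _ _ _; simp [packAux]
  | cons r rs ih =>
    intro x y sh hw hsh hsort
    have hrW : r.1 ≤ W := hw r (by simp)
    have hrsh : r.2 ≤ sh := hsh r (by simp)
    have hwt : ∀ s ∈ rs, s.1 ≤ W := fun s hs => hw s (by simp [hs])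
    have hsort' : rs.Pairwise (fun a b => b.2 ≤ a.2) := (List.pairwise_cons.mp hsort).2
    have hle : ∀ s ∈ rs, s.2 ≤ r.2 := (List.pairwise_cons.mp hsort).1
    have h2le : hd2 rs ≤ r.2 := hd2_le hsort
    by_cases hfit : x + r.1 ≤ W
    · have spec := ih (x + r.1) y sh hwt (fun s hs => hsh s (by simp [hs])) hsort'
      obtain ⟨L, C, P, H, D⟩ := spec
      simp only [packAux, if_pos hfit]
      refine ⟨by simpa using L, ?_, ?_, ?_, ?_⟩
      · intro p hp
        rcases (List.mem_cons).mp hp with hp | hp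
        · subst hp; simpa using hfit
        · exact C p hp
      · intro p hp
        rcases (List.mem_cons).mp hp with hp | hp
        · subst hp; exact Or.inl ⟨rfl, le_refl x⟩
        · rcases P p hp with ⟨h1, h2⟩ | h1
          · exact Or.inl ⟨h1, by omega⟩
          · exact Or.inr h1
      · intro p hp
        rcases (List.mem_cons).mp hp with hp | hp
        · subst hp
          simp only [larea, hd2]
          have : W * (y + r.2) ≤ W * (y + sh) := Nat.mul_le_mul_left W (by omega)
          omega
        · have := H p hp
          simp only [larea, hd2]
          have h3 : (x + r.1) * hd2 rs ≤ (x + r.1) * r.2 :=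
            Nat.mul_le_mul_left _ h2le
          nlinarith
      · refine List.pairwise_cons.mpr ⟨?_, D⟩
        intro q hq
        rcases P q hq with ⟨h1, h2⟩ | h1
        · exact Or.inl (show x + r.1 ≤ q.1.1 by omega)
        · exact Or.inr (Or.inr (Or.inl (show y + r.2 ≤ q.1.2 by omega)))
    · have spec := ih r.1 (y + sh) r.2 hwt hle hsort'
      obtain ⟨L, C, P, H, D⟩ := spec
      simp only [packAux, if_neg hfit]
      refine ⟨by simpa using L, ?_, ?_, ?_, ?_⟩
      · intro p hp
        rcases (List.mem_cons).mp hp with hp | hp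
        · subst hp; simpa using hrW
        · exact C p hp
      · intro p hp
        rcases (List.mem_cons).mp hp with hp | hp
        · subst hp; exact Or.inr (le_refl _)
        · rcases P p hp with ⟨h1, h2⟩ | h1
          · exact Or.inr (le_of_eq h1.symm)
          · exact Or.inr (by omega)
      · intro p hp
        have hWlt : W < x + r.1 := by omega
        rcases (List.mem_cons).mp hp with hp | hp
        · subst hp
          simp only [larea, hd2]
          have h3 : W * r.2 ≤ (x + r.1) * r.2 := Nat.mul_le_mul_right _ (le_of_lt hWlt)
          nlinarith
        · have := H p hp
          simp only [larea, hd2]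
          have h3 : W * r.2 ≤ (x + r.1) * r.2 := Nat.mul_le_mul_right _ (le_of_lt hWlt)
          have h4 : r.1 * hd2 rs ≤ r.1 * r.2 := Nat.mul_le_mul_left _ h2le
          nlinarith
      · refine List.pairwise_cons.mpr ⟨?_, D⟩
        intro q hq
        rcases P q hq with ⟨h1, h2⟩ | h1
        · exact Or.inl (show 0 + r.1 ≤ q.1.1 by omega)
        · exact Or.inr (Or.inr (Or.inl (show y + sh + r.2 ≤ q.1.2 by omega)))

end NFDHAux

/-- NFDH guarantee for strip packing (Lemma 2.2): every family of rectangles of width at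
most `W` can be feasibly packed into the strip of width `W` with height at most
`h_max + 2·a(R)/W`. -/
theorem nfdh_strip_packing
    (W : ℕ) (hW : 0 < W)
    (ι : Type*) [Fintype ι] (w h : ι → ℕ)
    (hpos : ∀ i, 0 < w i ∧ 0 < h i) (hwW : ∀ i, w i ≤ W) :
    ∃ x y : ι → ℕ,
      (∀ i, x i + w i ≤ W) ∧
      (Pairwise fun i j =>
        RectDisjoint (x i) (y i) (w i) (h i) (x j) (y j) (w j) (h j)) ∧
      (∀ i, ((y i + h i : ℕ) : ℝ) ≤
        ((Finset.univ.sup h : ℕ) : ℝ) + 2 * (∑ i, (w i : ℝ) * h i) / W) := by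
  classical
  rcases isEmpty_or_nonempty ι with hemp | hne
  · exact ⟨fun _ => 0, fun _ => 0, fun i => isEmptyElim i,
      fun i j _ => isEmptyElim i, fun i => isEmptyElim i⟩
  -- sort indices by decreasing height
  set l : List ι := (Finset.univ.toList (α := ι)).mergeSort (fun i j => decide (h j ≤ h i))
    with hldef
  have hperm : l.Perm (Finset.univ.toList (α := ι)) := List.mergeSort_perm _ _
  have hmem : ∀ i : ι, i ∈ l := fun i =>
    hperm.mem_iff.mpr (Finset.mem_toList.mpr (Finset.mem_univ i))
  have hnd : l.Nodup := hperm.nodup_iff.mpr (Finset.nodup_toList _)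
  have hsorted : l.Pairwise (fun i j => h j ≤ h i) := by
    have hs := List.pairwise_mergeSort (le := fun i j : ι => decide (h j ≤ h i))
      (fun a b c hab hbc => by simp only [decide_eq_true_eq] at *; omega)
      (fun a b => by simp only [Bool.or_eq_true, decide_eq_true_eq]; omega)
      (Finset.univ.toList (α := ι))
    exact hs.imp (fun hab => by simpa using hab)
  obtain ⟨i₀, t, hlt⟩ : ∃ a t, l = a :: t := by
    cases hl : l with
    | nil => exact absurd (hmem (Classical.arbitrary ι)) (by simp [hl])
    | cons a t => exact ⟨a, t, rfl⟩
  have hhd : ∀ i : ι, h i ≤ h i₀ := by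
    intro i
    rcases (by simpa [hlt] using hmem i : i = i₀ ∨ i ∈ t) with rfl | hi
    · exact le_refl _
    · exact (List.pairwise_cons.mp (hlt ▸ hsorted)).1 i hi
  have hℓw : ∀ r ∈ l.map (fun i => (w i, h i)), r.1 ≤ W := by
    intro r hr; obtain ⟨i, _, rfl⟩ := List.mem_map.mp hr; exact hwW i
  have hℓh : ∀ r ∈ l.map (fun i => (w i, h i)), r.2 ≤ h i₀ := by
    intro r hr; obtain ⟨i, _, rfl⟩ := List.mem_map.mp hr; exact hhd i
  have hℓsort : (l.map (fun i => (w i, h i))).Pairwise (fun r s => s.2 ≤ r.2) :=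
    (List.pairwise_map).mpr (hsorted.imp (fun hab => hab))
  obtain ⟨L, C, P, H, D⟩ :=
    NFDHAux.packAux_spec W (l.map (fun i => (w i, h i))) 0 0 (h i₀) hℓw hℓh hℓsort
  set ps := NFDHAux.packAux W 0 0 (h i₀) (l.map (fun i => (w i, h i))) with hpsdef
  have hki : ∀ i : ι, l.idxOf i < l.length := fun i =>
    List.idxOf_lt_length_iff.mpr (hmem i)
  have hkps : ∀ i : ι, l.idxOf i < ps.length := fun i => by
    rw [L, List.length_map]; exact hki i
  have hzlen : (ps.zip (l.map (fun i => (w i, h i)))).length = l.length := by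
    rw [List.length_zip, L, List.length_map, min_self]
  have hget : ∀ (i : ι) (hz : l.idxOf i <
      (ps.zip (l.map (fun i => (w i, h i)))).length),
      (ps.zip (l.map (fun i => (w i, h i))))[l.idxOf i]'hz =
        ((ps[l.idxOf i]'(hkps i)), (w i, h i)) := by
    intro i hz
    rw [List.getElem_zip, List.getElem_map]
    simp only [List.getElem_idxOf]
  refine ⟨fun i => (ps[l.idxOf i]'(hkps i)).1, fun i => (ps[l.idxOf i]'(hkps i)).2,
    ?_, ?_, ?_⟩
  case _ =>
    intro i
    have hz : l.idxOf i < (ps.zip (l.map (fun i => (w i, h i)))).length := by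
      rw [hzlen]; exact hki i
    have hmemz := List.getElem_mem hz
    have := C _ hmemz
    rw [hget i hz] at this
    exact this
  case _ =>
    intro i j hij
    have ha := hki i
    have hb := hki j
    have hne' : l.idxOf i ≠ l.idxOf j := by
      intro heq
      apply hij
      have : l[l.idxOf i]'ha = l[l.idxOf j]'hb := by congr 1
      rwa [List.getElem_idxOf, List.getElem_idxOf] at this
    rcases lt_or_gt_of_ne hne' with hlt' | hlt'
    · have := (List.pairwise_iff_getElem.mp D) (l.idxOf i) (l.idxOf j)
        (by rw [hzlen]; exact ha) (by rw [hzlen]; exact hb) hlt'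
      rwa [hget i (by rw [hzlen]; exact ha), hget j (by rw [hzlen]; exact hb)] at this
    · have := (List.pairwise_iff_getElem.mp D) (l.idxOf j) (l.idxOf i)
        (by rw [hzlen]; exact hb) (by rw [hzlen]; exact ha) hlt'
      rw [hget i (by rw [hzlen]; exact ha), hget j (by rw [hzlen]; exact hb)] at this
      exact NFDHAux.rectDisjoint_symm this
  case _ =>
    intro i
    have hz : l.idxOf i < (ps.zip (l.map (fun i => (w i, h i)))).length := by
      rw [hzlen]; exact hki i
    have hmemz := List.getElem_mem hz
    have hnat := H _ hmemz
    rw [hget i hz] at hnat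
    simp only at hnat
    have harea : NFDHAux.larea (l.map (fun i => (w i, h i))) = ∑ i, w i * h i := by
      have h1 : ∀ (m : List ι), NFDHAux.larea (m.map (fun i => (w i, h i))) =
          (m.map (fun i => w i * h i)).sum := by
        intro m
        induction m with
        | nil => rfl
        | cons a s ihs => simp [NFDHAux.larea, ihs]
      rw [h1]
      calc (l.map fun i => w i * h i).sum
          = ((Finset.univ.toList (α := ι)).map fun i => w i * h i).sum :=
            (hperm.map _).sum_eq
        _ = ∑ i, w i * h i := Finset.sum_map_toList _ _
    rw [harea] at hnat
    have hsup : h i₀ ≤ Finset.univ.sup h := Finset.le_sup (Finset.mem_univ i₀)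
    have hWR : (0:ℝ) < W := by exact_mod_cast hW
    set A : ℝ := ∑ i, (w i : ℝ) * h i with hAdef
    have hcast : (W:ℝ) * ((ps[l.idxOf i]'(hkps i)).2 + h i) ≤
        (W:ℝ) * (h i₀) + 2 * A := by
      have hc2 : ((W * ((ps[l.idxOf i]'(hkps i)).2 + h i) : ℕ) : ℝ) ≤
          ((W * (0 + h i₀) + 2 * (∑ i, w i * h i) +
            0 * NFDHAux.hd2 (l.map (fun i => (w i, h i))) : ℕ) : ℝ) := by
        exact_mod_cast hnat
      push_cast at hc2
      rw [hAdef]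
      push_cast
      linarith
    have h3 : (((ps[l.idxOf i]'(hkps i)).2 : ℝ) + (h i : ℝ)) ≤
        ((W:ℝ) * (h i₀) + 2 * A) / W := by
      rw [le_div_iff₀ hWR]
      nlinarith
    have h4 : ((W:ℝ) * (h i₀) + 2 * A) / W = (h i₀ : ℝ) + 2 * A / W := by
      field_simp
    rw [h4] at h3
    have h5 : ((h i₀ : ℕ) : ℝ) ≤ ((Finset.univ.sup h : ℕ) : ℝ) := by
      exact_mod_cast hsup
    push_cast
    linarith
end

section
/- Let ε ∈ (0,1), let 0 < δ_h ≤ ε, set γ = ε·δ_h/2, and let W, OPT be positive integers with γ·OPT ∈ ℕ. Suppose the finite family R of rectangles admits a feasible packing into [0,W]×[0,OPT]. For each rectangle R_i with h_i ≥ δ_h·OPT, let its rounded height be h_i' = γ·OPT·⌈h_i/(γ·OPT)⌉; all other rectangles keep their heights. Then there exists a feasible packing of the rounded family into [0,W]×[0,OPT'] for some OPT' ≤ (1+ε)·OPT such that every rectangle with h_i ≥ δ_h·OPT keeps the same x-coordinate as in the given packing and has a y-coordinate that is an integer multiple of γ·OPT. -/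
open scoped Classical

/-- A feasible packing of the family of rectangles `(w i, h i)` at positions `(x i, y i)`
inside `[0,W]×[0,H]`. -/
def IsPacking {ι : Type*} (w h x y : ι → ℕ) (W H : ℕ) : Prop :=
  (∀ i, x i + w i ≤ W ∧ y i + h i ≤ H) ∧
  Pairwise fun i j => RectDisjoint (x i) (y i) (w i) (h i) (x j) (y j) (w j) (h j)

/-- Height rounding lemma (Lemma 2.5, Nadiradze–Wiese): given a feasible packing into
`[0,W]×[0,OPT]`, rounding the height of every rectangle with `h_i ≥ δ_h·OPT` up to the next
multiple of `γ·OPT` (where `γ = ε·δ_h/2` and `g = γ·OPT ∈ ℕ`) admits a feasible packing of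
height `OPT' ≤ (1+ε)·OPT` in which those rectangles keep their `x`-coordinates and get
`y`-coordinates that are multiples of `γ·OPT`. -/
theorem height_rounding
    (ε δh : ℝ) (hε : ε ∈ Set.Ioo (0 : ℝ) 1) (hδh : 0 < δh) (hδhε : δh ≤ ε)
    (W OPT : ℕ) (hW : 0 < W) (hOPT : 0 < OPT)
    (g : ℕ) (hg : 0 < g) (hgval : (g : ℝ) = ε * δh / 2 * OPT)
    (ι : Type*) [Fintype ι] (w h : ι → ℕ) (hpos : ∀ i, 0 < w i ∧ 0 < h i)
    (x y : ι → ℕ) (hpack : IsPacking w h x y W OPT) :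
    ∃ OPT' : ℕ, (OPT' : ℝ) ≤ (1 + ε) * OPT ∧
      ∃ y' : ι → ℕ,
        IsPacking w
          (fun i => if δh * OPT ≤ (h i : ℝ) then g * ((h i + g - 1) / g) else h i)
          x y' W OPT' ∧
        ∀ i, δh * OPT ≤ (h i : ℝ) → g ∣ y' i := by
  obtain ⟨hε0, hε1⟩ := hε
  obtain ⟨hcont, hdisj⟩ := hpack
  -- round-up to multiple of g
  have roundub : ∀ n : ℕ, g * ((n + g - 1) / g) + 1 ≤ n + g := by
    intro n
    calc g * ((n + g - 1) / g) + 1 ≤ (n + g - 1) + 1 := by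
          have : g * ((n + g - 1) / g) ≤ n + g - 1 := by
            rw [mul_comm]; exact Nat.div_mul_le_self _ _
          omega
      _ = n + g := by omega
  have roundlb : ∀ n : ℕ, n ≤ g * ((n + g - 1) / g) := by
    intro n
    have h1 := Nat.div_add_mod (n + g - 1) g
    have h2 : (n + g - 1) % g < g := Nat.mod_lt _ hg
    set m := g * ((n + g - 1) / g) with hm
    set r := (n + g - 1) % g with hr
    omega
  set y' : ι → ℕ := fun i =>
    if δh * OPT ≤ (h i : ℝ) then g * ((y i + ⌈ε * (y i : ℝ)⌉₊ + g - 1) / g)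
    else y i + ⌊ε * (y i : ℝ)⌋₊ with hy'
  have hFle : ∀ t : ℕ, ((t + ⌊ε * (t : ℝ)⌋₊ : ℕ) : ℝ) ≤ (1 + ε) * t := by
    intro t
    have h1 : (⌊ε * (t : ℝ)⌋₊ : ℝ) ≤ ε * t := Nat.floor_le (by positivity)
    push_cast
    linarith
  have hFgt : ∀ t : ℕ, (1 + ε) * t - 1 < ((t + ⌊ε * (t : ℝ)⌋₊ : ℕ) : ℝ) := by
    intro t
    have h1 : ε * (t : ℝ) < ⌊ε * (t : ℝ)⌋₊ + 1 := Nat.lt_floor_add_one _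
    push_cast
    linarith
  have hy'ge : ∀ j, y j + ⌊ε * (y j : ℝ)⌋₊ ≤ y' j := by
    intro j
    by_cases hj : δh * OPT ≤ (h j : ℝ)
    · simp only [hy', if_pos hj]
      have h1 : y j + ⌊ε * (y j : ℝ)⌋₊ ≤ y j + ⌈ε * (y j : ℝ)⌉₊ :=
        Nat.add_le_add_left (Nat.floor_le_ceil _) _
      exact h1.trans (roundlb _)
    · simp only [hy', if_neg hj]
      exact le_rfl
  -- the key containment/separation lemma
  have key : ∀ (i : ι) (T : ℕ), y i + h i ≤ T →
      y' i + (if δh * OPT ≤ (h i : ℝ) then g * ((h i + g - 1) / g) else h i)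
        ≤ T + ⌊ε * (T : ℝ)⌋₊ := by
    intro i T hT
    by_cases hi : δh * OPT ≤ (h i : ℝ)
    · simp only [hy', if_pos hi]
      have hA := roundub (y i + ⌈ε * (y i : ℝ)⌉₊)
      have hB := roundub (h i)
      have hAr : ((g * ((y i + ⌈ε * (y i : ℝ)⌉₊ + g - 1) / g) : ℕ) : ℝ) + 1
          ≤ (y i : ℝ) + ⌈ε * (y i : ℝ)⌉₊ + g := by exact_mod_cast hA
      have hBr : ((g * ((h i + g - 1) / g) : ℕ) : ℝ) + 1 ≤ (h i : ℝ) + g := by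
        exact_mod_cast hB
      have hceil : (⌈ε * (y i : ℝ)⌉₊ : ℝ) < ε * y i + 1 :=
        Nat.ceil_lt_add_one (by positivity)
      have hεh : 2 * (g : ℝ) ≤ ε * h i := by
        have h1 : ε * (δh * OPT) ≤ ε * h i :=
          mul_le_mul_of_nonneg_left hi hε0.le
        nlinarith [hgval]
      have hmul : (1 + ε) * ((y i : ℝ) + h i) ≤ (1 + ε) * T := by
        have : ((y i : ℝ) + h i) ≤ T := by exact_mod_cast hT
        exact mul_le_mul_of_nonneg_left this (by linarith)
      have hFT := hFgt T
      have hreal : ((g * ((y i + ⌈ε * (y i : ℝ)⌉₊ + g - 1) / g)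
          + g * ((h i + g - 1) / g) : ℕ) : ℝ) < ((T + ⌊ε * (T : ℝ)⌋₊ : ℕ) : ℝ) := by
        push_cast at hAr hBr hFT ⊢
        linarith [hceil, hεh, hmul]
      have := Nat.cast_lt.mp hreal
      omega
    · simp only [hy', if_neg hi]
      have hle : ε * (y i : ℝ) ≤ ε * T := by
        have : (y i : ℝ) ≤ T := by
          have : y i ≤ T := by omega
          exact_mod_cast this
        exact mul_le_mul_of_nonneg_left this hε0.le
      have hm : ⌊ε * (y i : ℝ)⌋₊ ≤ ⌊ε * (T : ℝ)⌋₊ := Nat.floor_le_floor hle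
      omega
  refine ⟨OPT + ⌊ε * (OPT : ℝ)⌋₊, ?_, y', ⟨?_, ?_⟩, ?_⟩
  · exact hFle OPT
  · intro i
    exact ⟨(hcont i).1, key i OPT (hcont i).2⟩
  · intro i j hij
    rcases hdisj hij with h1 | h2 | h3 | h4
    · exact Or.inl h1
    · exact Or.inr (Or.inl h2)
    · exact Or.inr (Or.inr (Or.inl ((key i (y j) h3).trans (hy'ge j))))
    · exact Or.inr (Or.inr (Or.inr ((key j (y i) h4).trans (hy'ge i))))
  · intro i hi
    simp only [hy', if_pos hi]
    exact Dvd.intro _ rfl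
end

section
/- Let w̄ be a positive integer, h̄ > 0 a real number, and let γ, ε, α be reals with 0 < γ ≤ ε < α < 1/2. Let f, g : {1,…,w̄} → ℝ_{≥0} satisfy: (i) ∑_{i=1}^{w̄} f(i) = ∑_{i=1}^{w̄} g(i); (ii) g(i) ≤ (1 − 2α/(1+ε))·h̄ for every i; and (iii) f(i) − g(i) ≥ γ·h̄/(1+ε) for every i with g(i) < f(i). Then the set G = {i : g(i) ≥ f(i)} satisfies |G| ≥ (γ/(1+ε−2α+γ))·w̄, and consequently |G| ≥ γ·w̄. -/
open scoped Classical

/-- Counting core of the Repacking Lemma (Lemma 3.1): if `f` and `g` are nonnegative on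
`{1,…,w̄}` with equal sums, `g(i) ≤ (1 − 2α/(1+ε))·h̄` everywhere, and
`f(i) − g(i) ≥ γ·h̄/(1+ε)` whenever `g(i) < f(i)`, then the set `G = {i : g(i) ≥ f(i)}`
has cardinality at least `(γ/(1+ε−2α+γ))·w̄ ≥ γ·w̄`. -/
theorem repacking_counting
    (wbar : ℕ) (hwbar : 0 < wbar) (hbar : ℝ) (hhbar : 0 < hbar)
    (γ ε α : ℝ) (hγ : 0 < γ) (hγε : γ ≤ ε) (hεα : ε < α) (hα : α < 1 / 2)
    (f g : ℕ → ℝ)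
    (hnn : ∀ i ∈ Finset.Icc 1 wbar, 0 ≤ f i ∧ 0 ≤ g i)
    (hsum : ∑ i ∈ Finset.Icc 1 wbar, f i = ∑ i ∈ Finset.Icc 1 wbar, g i)
    (hgub : ∀ i ∈ Finset.Icc 1 wbar, g i ≤ (1 - 2 * α / (1 + ε)) * hbar)
    (hgap : ∀ i ∈ Finset.Icc 1 wbar, g i < f i → γ * hbar / (1 + ε) ≤ f i - g i) :
    γ / (1 + ε - 2 * α + γ) * wbar ≤
      (((Finset.Icc 1 wbar).filter (fun i => f i ≤ g i)).card : ℝ) ∧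
    γ * wbar ≤ (((Finset.Icc 1 wbar).filter (fun i => f i ≤ g i)).card : ℝ) := by
  set S := Finset.Icc 1 wbar with hS
  set G := S.filter (fun i => f i ≤ g i) with hG
  set B := S.filter (fun i => ¬ f i ≤ g i) with hB
  have hε0 : (0:ℝ) < 1 + ε := by linarith
  -- sum split
  have hsplit : ∑ i ∈ G, (g i - f i) = ∑ i ∈ B, (f i - g i) := by
    have h1 : ∑ i ∈ G, (g i - f i) + ∑ i ∈ B, (g i - f i) = ∑ i ∈ S, (g i - f i) := by
      rw [hG, hB, Finset.sum_filter_add_sum_filter_not]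
    have h2 : ∑ i ∈ S, (g i - f i) = 0 := by
      rw [Finset.sum_sub_distrib, ← hsum]; ring
    have h3 : ∑ i ∈ B, (f i - g i) = - ∑ i ∈ B, (g i - f i) := by
      rw [← Finset.sum_neg_distrib]; simp
    linarith [h1, h2, h3]
  have hBlb : (B.card : ℝ) * (γ * hbar / (1 + ε)) ≤ ∑ i ∈ B, (f i - g i) := by
    have := Finset.card_nsmul_le_sum B (fun i => f i - g i) (γ * hbar / (1 + ε))
      (fun i hi => by
        rw [hB, Finset.mem_filter] at hi
        exact hgap i hi.1 (lt_of_not_ge hi.2))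
    simpa [nsmul_eq_mul] using this
  have hGub : ∑ i ∈ G, (g i - f i) ≤ (G.card : ℝ) * ((1 - 2 * α / (1 + ε)) * hbar) := by
    have := Finset.sum_le_card_nsmul G (fun i => g i - f i) ((1 - 2 * α / (1 + ε)) * hbar)
      (fun i hi => by
        rw [hG, Finset.mem_filter] at hi
        have h1 := hgub i hi.1
        have h2 := (hnn i hi.1).1
        linarith)
    simpa [nsmul_eq_mul] using this
  have hcard : G.card + B.card = wbar := by
    rw [hG, hB, Finset.card_filter_add_card_filter_not, hS, Nat.card_Icc]
    omega
  have hcardR : (G.card : ℝ) + (B.card : ℝ) = (wbar : ℝ) := by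
    exact_mod_cast congrArg (Nat.cast : ℕ → ℝ) hcard
  set k := (G.card : ℝ) with hk
  have hkey : ((wbar : ℝ) - k) * (γ * hbar / (1 + ε)) ≤ k * ((1 - 2 * α / (1 + ε)) * hbar) := by
    have : (B.card : ℝ) = (wbar : ℝ) - k := by linarith
    rw [← this]; linarith [hBlb, hGub, hsplit]
  -- clear denominators
  have hkey2 : ((wbar : ℝ) - k) * γ ≤ k * (1 + ε - 2 * α) := by
    have h1 : (1 - 2 * α / (1 + ε)) = (1 + ε - 2 * α) / (1 + ε) := by
      field_simp
    rw [h1] at hkey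
    have hc : (0:ℝ) < hbar / (1 + ε) := by positivity
    have hkey' : ((wbar : ℝ) - k) * γ * (hbar / (1 + ε)) ≤ k * (1 + ε - 2 * α) * (hbar / (1 + ε)) := by
      have e1 : ((wbar : ℝ) - k) * γ * (hbar / (1 + ε)) = ((wbar : ℝ) - k) * (γ * hbar / (1 + ε)) := by ring
      have e2 : k * (1 + ε - 2 * α) * (hbar / (1 + ε)) = k * ((1 + ε - 2 * α) / (1 + ε) * hbar) := by ring
      rw [e1, e2]; exact hkey
    exact le_of_mul_le_mul_right hkey' hc
  have hdpos : (0:ℝ) < 1 + ε - 2 * α + γ := by linarith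
  have hmain : γ / (1 + ε - 2 * α + γ) * wbar ≤ k := by
    rw [div_mul_eq_mul_div, div_le_iff₀ hdpos]
    nlinarith [hkey2]
  refine ⟨hmain, ?_⟩
  have hd1 : 1 + ε - 2 * α + γ ≤ 1 := by linarith
  have : γ * wbar ≤ γ / (1 + ε - 2 * α + γ) * wbar := by
    have hw : (0:ℝ) ≤ (wbar:ℝ) := Nat.cast_nonneg _
    have : γ ≤ γ / (1 + ε - 2 * α + γ) := by
      rw [le_div_iff₀ hdpos]; nlinarith
    nlinarith
  linarith
end

section
/- Let d, q be positive integers, let w̄ be a positive integer and h a positive real. Suppose a finite family of rectangles, each of width 1 and of height at least h/d, whose heights take at most q distinct values, is feasibly packed in the box [0,w̄]×[0,h]. Then there is a partition of the family into at most d·(q+1)^d groups, each group consisting of rectangles all of one common height, and a feasible packing of all the rectangles into the same box in which, for each group, the rectangles of the group are placed side by side forming an axis-aligned rectangular block whose height equals the common height of the group and whose width equals the number of rectangles in the group; in particular, the total area of the blocks equals the total area of the rectangles. -/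
open scoped Classical

/-- Open axis-aligned rectangles (real coordinates) `(x₁, x₁+w₁) × (y₁, y₁+h₁)` and
`(x₂, x₂+w₂) × (y₂, y₂+h₂)` are disjoint. -/
def RectDisjointR (x₁ y₁ w₁ h₁ x₂ y₂ w₂ h₂ : ℝ) : Prop :=
  x₁ + w₁ ≤ x₂ ∨ x₂ + w₂ ≤ x₁ ∨ y₁ + h₁ ≤ y₂ ∨ y₂ + h₂ ≤ y₁

noncomputable def occChoice {ι : Type*} (col slo : ι → ℕ) (k s : ℕ) : Option ι :=
  if h : ∃ i, col i = k ∧ slo i = s then some h.choose else none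

lemma occChoice_spec {ι : Type*} {col slo : ι → ℕ} {k s : ℕ} {i : ι}
    (h : occChoice col slo k s = some i) : col i = k ∧ slo i = s := by
  unfold occChoice at h
  split at h
  · rename_i he
    obtain rfl : he.choose = i := by injection h
    exact he.choose_spec
  · simp at h

lemma occChoice_self {ι : Type*} {col slo : ι → ℕ}
    (huniq : ∀ i j, col i = col j → slo i = slo j → i = j) (i : ι) :
    occChoice col slo (col i) (slo i) = some i := by
  have he : ∃ j, col j = col i ∧ slo j = slo i := ⟨i, rfl, rfl⟩
  unfold occChoice
  rw [dif_pos he]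
  exact congrArg some (huniq _ _ he.choose_spec.1 he.choose_spec.2)

lemma occChoice_none {ι : Type*} {col slo : ι → ℕ} {k s : ℕ}
    (h : ¬ ∃ i, col i = k ∧ slo i = s) : occChoice col slo k s = none := by
  unfold occChoice
  rw [dif_neg h]

noncomputable def hvF {ι : Type*} (col slo : ι → ℕ) (ht : ι → ℝ) (k s : ℕ) : ℝ :=
  match occChoice col slo k s with
  | some i => ht i
  | none => 0

noncomputable def tnF {ι : Type*} (col slo : ι → ℕ) (hc : ι → ℕ) (k s : ℕ) : ℕ :=
  match occChoice col slo k s with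
  | some i => hc i + 1
  | none => 0

lemma hvF_eq_of_occ {ι : Type*} {col slo : ι → ℕ} (ht : ι → ℝ) {k s : ℕ} {i : ι}
    (h : occChoice col slo k s = some i) : hvF col slo ht k s = ht i := by
  unfold hvF; rw [h]

lemma tnF_eq_of_occ {ι : Type*} {col slo : ι → ℕ} (hc : ι → ℕ) {k s : ℕ} {i : ι}
    (h : occChoice col slo k s = some i) : tnF col slo hc k s = hc i + 1 := by
  unfold tnF; rw [h]

/-- Lemma 4.1: a family of unit-width rectangles of height at least `h/d`, with at most
`q` distinct heights, packed in a box `[0,w̄]×[0,h]`, can be repacked into the same box in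
at most `d·(q+1)^d` groups, each group consisting of rectangles of one common height placed
side by side forming a rectangular block of that height whose width equals the number of
rectangles in the group (so the blocks are vertical containers whose total area equals the
total area of the rectangles). -/
theorem repack_unit_slices_into_containers
    (d q : ℕ) (hd : 0 < d) (hq : 0 < q)
    (wbar : ℕ) (hwbar : 0 < wbar) (h : ℝ) (hh : 0 < h)
    (ι : Type*) [Fintype ι] (ht : ι → ℝ)
    (hht : ∀ i, 0 < ht i ∧ h / d ≤ ht i)
    (hqvals : (Finset.univ.image ht).card ≤ q)
    (x y : ι → ℝ)
    (hin : ∀ i, 0 ≤ x i ∧ x i + 1 ≤ wbar ∧ 0 ≤ y i ∧ y i + ht i ≤ h)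
    (hdisj : Pairwise fun i j =>
      RectDisjointR (x i) (y i) 1 (ht i) (x j) (y j) 1 (ht j)) :
    ∃ (n : ℕ) (c : ι → ℕ) (x' y' : ι → ℝ) (X Y : ℕ → ℝ),
      n ≤ d * (q + 1) ^ d ∧
      (∀ i, c i < n) ∧
      (∀ i j, c i = c j → ht i = ht j) ∧
      (∀ i, 0 ≤ x' i ∧ x' i + 1 ≤ wbar ∧ 0 ≤ y' i ∧ y' i + ht i ≤ h) ∧
      (Pairwise fun i j =>
        RectDisjointR (x' i) (y' i) 1 (ht i) (x' j) (y' j) 1 (ht j)) ∧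
      (∀ i, y' i = Y (c i) ∧ X (c i) ≤ x' i ∧
        x' i + 1 ≤ X (c i) + ((Finset.univ.filter (fun j => c j = c i)).card : ℝ)) := by
  classical
  have hdR : (0:ℝ) < (d:ℝ) := by exact_mod_cast hd
  -- columns
  set col : ι → ℕ := fun i => ⌈x i⌉₊ with hcoldef
  have hxcol : ∀ i, x i ≤ (col i : ℝ) ∧ (col i : ℝ) < x i + 1 := by
    intro i
    exact ⟨Nat.le_ceil _, Nat.ceil_lt_add_one (hin i).1⟩
  have hcolw : ∀ i, col i < wbar := by
    intro i
    have h1 : x i ≤ ((wbar - 1 : ℕ) : ℝ) := by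
      rw [Nat.cast_sub hwbar]
      push_cast
      linarith [(hin i).2.1]
    have h2 : col i ≤ wbar - 1 := Nat.ceil_le.mpr h1
    omega
  -- slots
  set slo : ι → ℕ := fun i => ⌊y i * d / h⌋₊ with hslodef
  have hslod : ∀ i, slo i < d := by
    intro i
    have hy0 : 0 ≤ y i := (hin i).2.2.1
    have hyh : y i < h := by
      have := (hin i).2.2.2; have := (hht i).1; linarith
    have h1 : y i * d / h < d := by
      rw [div_lt_iff₀ hh]
      nlinarith
    exact (Nat.floor_lt (by positivity)).mpr h1
  have hvert : ∀ i j, i ≠ j → col i = col j → y i + ht i ≤ y j ∨ y j + ht j ≤ y i := by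
    intro i j hne hc
    have hcR : (col i : ℝ) = (col j : ℝ) := by exact_mod_cast congrArg Nat.cast hc
    rcases hdisj hne with h1 | h1 | h1 | h1
    · exfalso
      have ha := (hxcol i).2; have hb := (hxcol j).1
      linarith
    · exfalso
      have ha := (hxcol j).2; have hb := (hxcol i).1
      linarith
    · exact Or.inl h1
    · exact Or.inr h1
  have hsmono : ∀ i j, y i + ht i ≤ y j → slo i < slo j := by
    intro i j hij
    have hy0 : 0 ≤ y i := (hin i).2.2.1
    have h0 : 0 ≤ y i * d / h := by positivity
    have hid : h / d ≤ ht i := (hht i).2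
    have key : y i * d / h + 1 ≤ y j * d / h := by
      have he : (y i + h / d) * d / h = y i * d / h + 1 := by
        field_simp
      have hmono : (y i + h / d) * d / h ≤ y j * d / h := by
        gcongr <;> linarith
      linarith [he ▸ hmono]
    have h2 : ⌊y i * d / h + 1⌋₊ ≤ ⌊y j * d / h⌋₊ := Nat.floor_le_floor key
    rw [Nat.floor_add_one h0] at h2
    simp only [hslodef]
    omega
  have huniq : ∀ i j, col i = col j → slo i = slo j → i = j := by
    intro i j hc hs
    by_contra hne
    rcases hvert i j hne hc with h1 | h1
    · have := hsmono i j h1; omega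
    · have := hsmono j i h1; omega
  -- height codes
  set V := Finset.univ.image ht with hVdef
  have hmemV : ∀ i, ht i ∈ V := fun i => Finset.mem_image_of_mem ht (Finset.mem_univ i)
  set hcode : ι → ℕ := fun i => ((Fintype.equivFin (↥V)) ⟨ht i, hmemV i⟩).val with hhcdef
  have hcq : ∀ i, hcode i < q := by
    intro i
    have h1 : hcode i < Fintype.card ↥V := ((Fintype.equivFin (↥V)) ⟨ht i, hmemV i⟩).isLt
    rw [Fintype.card_coe] at h1
    omega
  have hcinj : ∀ i j, hcode i = hcode j → ht i = ht j := by
    intro i j hij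
    have h1 : (Fintype.equivFin (↥V)) ⟨ht i, hmemV i⟩ = (Fintype.equivFin (↥V)) ⟨ht j, hmemV j⟩ :=
      Fin.ext hij
    have h2 := (Fintype.equivFin (↥V)).injective h1
    exact congrArg Subtype.val h2
  -- occupancy tables
  have hoccself : ∀ i, occChoice col slo (col i) (slo i) = some i := occChoice_self huniq
  set hv : ℕ → ℕ → ℝ := hvF col slo ht with hhvdef
  set tn : ℕ → ℕ → ℕ := tnF col slo hcode with htndef
  have hv_self : ∀ i, hv (col i) (slo i) = ht i := fun i => hvF_eq_of_occ ht (hoccself i)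
  have tn_self : ∀ i, tn (col i) (slo i) = hcode i + 1 := fun i => tnF_eq_of_occ hcode (hoccself i)
  have hv_nonneg : ∀ k s, 0 ≤ hv k s := by
    intro k s
    simp only [hhvdef]
    unfold hvF
    rcases hE : occChoice col slo k s with _ | i
    · simp
    · simp only
      exact (hht i).1.le
  have hv_none : ∀ k s, (¬ ∃ i, col i = k ∧ slo i = s) → hv k s = 0 := by
    intro k s hns
    simp only [hhvdef]
    unfold hvF
    rw [occChoice_none hns]
  have htnq : ∀ k s, tn k s < q + 1 := by
    intro k s
    simp only [htndef]
    unfold tnF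
    rcases hE : occChoice col slo k s with _ | i
    · simp
    · simp only
      have := hcq i; omega
  have tn_some : ∀ k s, tn k s ≠ 0 →
      ∃ i, col i = k ∧ slo i = s ∧ tn k s = hcode i + 1 ∧ hv k s = ht i := by
    intro k s h0
    rcases hE : occChoice col slo k s with _ | i
    · exfalso
      apply h0
      simp only [htndef]
      unfold tnF
      rw [hE]
    · obtain ⟨h1, h2⟩ := occChoice_spec hE
      exact ⟨i, h1, h2, tnF_eq_of_occ hcode hE, hvF_eq_of_occ ht hE⟩
  have tn_zero_hv : ∀ k s, tn k s = 0 → hv k s = 0 := by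
    intro k s h0
    rcases hE : occChoice col slo k s with _ | i
    · simp only [hhvdef]; unfold hvF; rw [hE]
    · exfalso
      have h1 : tn k s = hcode i + 1 := by
        simp only [htndef]; exact tnF_eq_of_occ hcode hE
      omega
  have tn_hv : ∀ k k' s s', tn k s = tn k' s' → hv k s = hv k' s' := by
    intro k k' s s' hteq
    by_cases h0 : tn k s = 0
    · rw [tn_zero_hv k s h0, tn_zero_hv k' s' (by omega)]
    · obtain ⟨i, _, _, ha, hb⟩ := tn_some k s h0
      obtain ⟨j, _, _, hc', hd'⟩ := tn_some k' s' (by omega)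
      rw [hb, hd']
      apply hcinj
      omega
  -- partial sums claim
  have hpartial : ∀ s : ℕ, ∀ i, slo i = s → ∑ j ∈ Finset.range s, hv (col i) j ≤ y i := by
    intro s
    induction s using Nat.strong_induction_on with
    | _ s ih =>
      intro i hs
      set B := (Finset.range s).filter (fun j => ∃ i', col i' = col i ∧ slo i' = j) with hBdef
      rcases B.eq_empty_or_nonempty with hBe | hBne
      · have hz : ∀ j ∈ Finset.range s, hv (col i) j = 0 := by
          intro j hj
          apply hv_none
          intro hex
          have hmem : j ∈ B := Finset.mem_filter.mpr ⟨hj, hex⟩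
          rw [hBe] at hmem
          exact absurd hmem (Finset.notMem_empty j)
        rw [Finset.sum_eq_zero hz]
        exact (hin i).2.2.1
      · set s' := B.max' hBne with hs'def
        have hs'B : s' ∈ B := B.max'_mem hBne
        have hs'mem := Finset.mem_filter.mp hs'B
        have hs'r : s' ∈ Finset.range s := hs'mem.1
        obtain ⟨i', hci', hsi'⟩ := hs'mem.2
        have hs's : s' < s := Finset.mem_range.mp hs'r
        have hne : i' ≠ i := by
          intro he
          rw [he] at hsi'
          omega
        have hyi' : y i' + ht i' ≤ y i := by
          rcases hvert i' i hne hci' with h1 | h1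
          · exact h1
          · exfalso
            have := hsmono i i' h1
            omega
        have hsum1 : ∑ j ∈ Finset.range s', hv (col i') j ≤ y i' := ih s' hs's i' hsi'
        rw [hci'] at hsum1
        have hsplit : ∑ j ∈ Finset.range s, hv (col i) j
            = ∑ j ∈ Finset.range (s' + 1), hv (col i) j
              + ∑ j ∈ Finset.Ico (s' + 1) s, hv (col i) j := by
          rw [Finset.range_eq_Ico,
            ← Finset.sum_Ico_consecutive (fun j => hv (col i) j) (Nat.zero_le (s' + 1))
              (by omega : s' + 1 ≤ s), ← Finset.range_eq_Ico]
        have hzero : ∑ j ∈ Finset.Ico (s' + 1) s, hv (col i) j = 0 := by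
          apply Finset.sum_eq_zero
          intro j hj
          rw [Finset.mem_Ico] at hj
          apply hv_none
          rintro ⟨i'', h1, h2⟩
          have hmem : j ∈ B :=
            Finset.mem_filter.mpr ⟨Finset.mem_range.mpr hj.2, i'', h1, h2⟩
          have := B.le_max' j hmem
          omega
        have hlast : hv (col i) s' = ht i' := by
          rw [← hci', ← hsi']
          exact hv_self i'
        rw [hsplit, hzero, Finset.sum_range_succ, hlast]
        linarith
  -- new vertical positions
  set y' : ι → ℝ := fun i => ∑ j ∈ Finset.range (slo i), hv (col i) j with hy'def
  have hy'nonneg : ∀ i, 0 ≤ y' i := by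
    intro i
    exact Finset.sum_nonneg fun j _ => hv_nonneg _ _
  have hy'le : ∀ i, y' i ≤ y i := fun i => hpartial (slo i) i rfl
  have hstack : ∀ i j, col i = col j → slo i < slo j → y' i + ht i ≤ y' j := by
    intro i j hcc hss
    have h1 : y' j = ∑ j' ∈ Finset.range (slo j), hv (col i) j' := by
      simp only [hy'def, hcc]
    have h2 : ∑ j' ∈ Finset.range (slo i + 1), hv (col i) j'
        ≤ ∑ j' ∈ Finset.range (slo j), hv (col i) j' := by
      apply Finset.sum_le_sum_of_subset_of_nonneg
      · exact Finset.range_subset_range.mpr (by omega)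
      · intro j' _ _; exact hv_nonneg _ _
    rw [Finset.sum_range_succ, hv_self i] at h2
    rw [h1]
    exact h2
  -- types
  set Q := (q + 1) ^ d with hQdef
  have hQ0 : 0 < Q := by positivity
  set ftyp : ℕ → (Fin d → Fin (q + 1)) := fun k j => ⟨tn k j.val, htnq k j.val⟩ with hftypdef
  set eT : (Fin d → Fin (q + 1)) ≃ Fin Q :=
    Fintype.equivFinOfCardEq (by simp [hQdef]) with heTdef
  set etype : ℕ → ℕ := fun k => (eT (ftyp k)).val with hetydef
  have hetQ : ∀ k, etype k < Q := fun k => (eT (ftyp k)).isLt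
  have hetinj : ∀ k k', etype k = etype k' → ∀ s, s < d → tn k s = tn k' s := by
    intro k k' he s hsd
    have h1 : ftyp k = ftyp k' := eT.injective (Fin.ext he)
    have h2 := congrFun h1 ⟨s, hsd⟩
    exact congrArg Fin.val h2
  -- group index
  set c : ι → ℕ := fun i => Q * slo i + etype (col i) with hcdef
  have hcn : ∀ i, c i < d * Q := by
    intro i
    have h1 : slo i + 1 ≤ d := hslod i
    have h2 : etype (col i) < Q := hetQ _
    calc Q * slo i + etype (col i) < Q * (slo i + 1) := by
          simp only [Nat.mul_add, Nat.mul_one]; omega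
      _ ≤ Q * d := Nat.mul_le_mul_left _ h1
      _ = d * Q := Nat.mul_comm _ _
  have hcdec : ∀ i j, c i = c j → slo i = slo j ∧ etype (col i) = etype (col j) := by
    intro i j hij
    simp only [hcdef] at hij
    constructor
    · have e1 : (Q * slo i + etype (col i)) / Q = slo i := by
        rw [Nat.mul_add_div hQ0, Nat.div_eq_of_lt (hetQ _)]
        omega
      have e2 : (Q * slo j + etype (col j)) / Q = slo j := by
        rw [Nat.mul_add_div hQ0, Nat.div_eq_of_lt (hetQ _)]
        omega
      rw [← e1, ← e2, hij]
    · have e1 : (Q * slo i + etype (col i)) % Q = etype (col i) := by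
        rw [Nat.mul_add_mod, Nat.mod_eq_of_lt (hetQ _)]
      have e2 : (Q * slo j + etype (col j)) % Q = etype (col j) := by
        rw [Nat.mul_add_mod, Nat.mod_eq_of_lt (hetQ _)]
      rw [← e1, ← e2, hij]
  have hceq_ht : ∀ i j, c i = c j → ht i = ht j := by
    intro i j hij
    obtain ⟨hs, he⟩ := hcdec i j hij
    have h1 : tn (col i) (slo i) = tn (col j) (slo i) := hetinj _ _ he (slo i) (hslod i)
    rw [tn_self i, hs, tn_self j] at h1
    exact hcinj i j (by omega)
  have hy'c : ∀ i j, c i = c j → y' i = y' j := by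
    intro i j hij
    obtain ⟨hs, he⟩ := hcdec i j hij
    simp only [hy'def, ← hs]
    apply Finset.sum_congr rfl
    intro j' hj'
    have hj'd : j' < d := lt_trans (Finset.mem_range.mp hj') (hslod i)
    exact tn_hv _ _ _ _ (hetinj _ _ he j' hj'd)
  -- horizontal positions
  set pos : ℕ → ℕ := fun k => ((Finset.range wbar).filter
      (fun k' => etype k' < etype k ∨ (etype k' = etype k ∧ k' < k))).card with hposdef
  have hposlt : ∀ k, k < wbar → pos k < wbar := by
    intro k hk
    have h1 : ((Finset.range wbar).filter
        (fun k' => etype k' < etype k ∨ (etype k' = etype k ∧ k' < k))).card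
        < (Finset.range wbar).card := by
      apply Finset.card_lt_card
      rw [Finset.ssubset_iff_of_subset (Finset.filter_subset _ _)]
      refine ⟨k, Finset.mem_range.mpr hk, ?_⟩
      intro hm
      have := (Finset.mem_filter.mp hm).2
      omega
    rw [Finset.card_range] at h1
    exact h1
  have hposmono : ∀ k k', k < wbar → k' < wbar →
      (etype k < etype k' ∨ (etype k = etype k' ∧ k < k')) → pos k < pos k' := by
    intro k k' hk hk' hlex
    apply Finset.card_lt_card
    have hsub : (Finset.range wbar).filter
        (fun k'' => etype k'' < etype k ∨ (etype k'' = etype k ∧ k'' < k))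
        ⊆ (Finset.range wbar).filter
        (fun k'' => etype k'' < etype k' ∨ (etype k'' = etype k' ∧ k'' < k')) := by
      intro a ha
      rw [Finset.mem_filter] at ha ⊢
      refine ⟨ha.1, ?_⟩
      have := ha.2
      omega
    rw [Finset.ssubset_iff_of_subset hsub]
    refine ⟨k, Finset.mem_filter.mpr ⟨Finset.mem_range.mpr hk, by omega⟩, ?_⟩
    intro hm
    have := (Finset.mem_filter.mp hm).2
    omega
  have hposinj : ∀ k k', k < wbar → k' < wbar → pos k = pos k' → k = k' := by
    intro k k' hk hk' hpe
    by_contra hne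
    rcases Nat.lt_trichotomy (etype k) (etype k') with hlt | heq | hgt
    · have := hposmono k k' hk hk' (Or.inl hlt); omega
    · rcases Nat.lt_trichotomy k k' with h1 | h1 | h1
      · have := hposmono k k' hk hk' (Or.inr ⟨heq, h1⟩); omega
      · exact hne h1
      · have := hposmono k' k hk' hk (Or.inr ⟨heq.symm, h1⟩); omega
    · have := hposmono k' k hk' hk (Or.inl hgt); omega
  have hpossplit : ∀ k, pos k
      = ((Finset.range wbar).filter (fun k' => etype k' < etype k)).card
        + ((Finset.range wbar).filter (fun k' => etype k' = etype k ∧ k' < k)).card := by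
    intro k
    simp only [hposdef]
    rw [Finset.filter_or, Finset.card_union_of_disjoint]
    rw [Finset.disjoint_left]
    intro a ha hb
    have h1 := (Finset.mem_filter.mp ha).2
    have h2 := (Finset.mem_filter.mp hb).2
    omega
  -- group cardinality
  have hG : ∀ i, (Finset.univ.filter (fun j => c j = c i)).card
      = ((Finset.range wbar).filter (fun k' => etype k' = etype (col i))).card := by
    intro i
    apply Finset.card_bij (fun j _ => col j)
    · intro j hj
      have hcj : c j = c i := (Finset.mem_filter.mp hj).2
      have := (hcdec j i hcj).2
      exact Finset.mem_filter.mpr ⟨Finset.mem_range.mpr (hcolw j), this⟩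
    · intro j hj j' hj' hcc
      have hcj : c j = c i := (Finset.mem_filter.mp hj).2
      have hcj' : c j' = c i := (Finset.mem_filter.mp hj').2
      have h1 := (hcdec j i hcj).1
      have h2 := (hcdec j' i hcj').1
      exact huniq j j' hcc (by omega)
    · intro k' hk'
      rw [Finset.mem_filter, Finset.mem_range] at hk'
      have h1 : tn k' (slo i) = tn (col i) (slo i) := hetinj _ _ hk'.2 (slo i) (hslod i)
      rw [tn_self i] at h1
      obtain ⟨j, hcj, hsj, _, _⟩ := tn_some k' (slo i) (by omega)
      refine ⟨j, Finset.mem_filter.mpr ⟨Finset.mem_univ j, ?_⟩, hcj⟩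
      simp only [hcdef]
      rw [hsj, hcj, hk'.2]
  -- final assembly
  set x'f : ι → ℝ := fun i => (pos (col i) : ℝ) with hx'fdef
  set Xf : ℕ → ℝ := fun n => if hn : ∃ i, c i = n then
      (((Finset.range wbar).filter (fun k' => etype k' < etype (col hn.choose))).card : ℝ)
    else 0 with hXfdef
  set Yf : ℕ → ℝ := fun n => if hn : ∃ i, c i = n then y' hn.choose else 0 with hYfdef
  refine ⟨d * Q, c, x'f, y', Xf, Yf, le_rfl, hcn, hceq_ht, ?_, ?_, ?_⟩
  · intro i
    have h1 : pos (col i) + 1 ≤ wbar := hposlt (col i) (hcolw i)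
    have h1R : ((pos (col i) : ℝ)) + 1 ≤ (wbar : ℝ) := by exact_mod_cast h1
    have h2 := hy'le i
    have h3 := (hin i).2.2.2
    simp only [hx'fdef]
    exact ⟨Nat.cast_nonneg _, h1R, hy'nonneg i, by linarith⟩
  · intro i j hne
    simp only [hx'fdef, RectDisjointR]
    by_cases hcc : col i = col j
    · have hss : slo i ≠ slo j := fun hs => hne (huniq i j hcc hs)
      rcases Nat.lt_or_ge (slo i) (slo j) with h1 | h1
      · exact Or.inr (Or.inr (Or.inl (hstack i j hcc h1)))
      · have h2 : slo j < slo i := by omega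
        exact Or.inr (Or.inr (Or.inr (hstack j i hcc.symm h2)))
    · have hne' : pos (col i) ≠ pos (col j) := by
        intro hpe
        exact hcc (hposinj _ _ (hcolw i) (hcolw j) hpe)
      rcases Nat.lt_or_ge (pos (col i)) (pos (col j)) with h1 | h1
      · left
        have h2 : pos (col i) + 1 ≤ pos (col j) := h1
        exact_mod_cast h2
      · right; left
        have h2 : pos (col j) + 1 ≤ pos (col i) := by omega
        exact_mod_cast h2
  · intro i
    have hex : ∃ j, c j = c i := ⟨i, rfl⟩
    have hspec : c hex.choose = c i := hex.choose_spec
    have hety_eq : etype (col hex.choose) = etype (col i) := (hcdec _ _ hspec).2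
    refine ⟨?_, ?_, ?_⟩
    · simp only [hYfdef]
      rw [dif_pos hex]
      exact (hy'c _ _ hspec).symm
    · simp only [hXfdef, hx'fdef]
      rw [dif_pos hex, hety_eq]
      have h1 : ((Finset.range wbar).filter (fun k' => etype k' < etype (col i))).card
          ≤ pos (col i) := by
        rw [hpossplit]
        omega
      exact_mod_cast h1
    · simp only [hXfdef, hx'fdef]
      rw [dif_pos hex, hety_eq, hG i]
      have hB'G : ((Finset.range wbar).filter
          (fun k' => etype k' = etype (col i) ∧ k' < col i)).card + 1
          ≤ ((Finset.range wbar).filter (fun k' => etype k' = etype (col i))).card := by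
        have hnm : col i ∉ (Finset.range wbar).filter
            (fun k' => etype k' = etype (col i) ∧ k' < col i) := by
          intro hm
          have := (Finset.mem_filter.mp hm).2
          omega
        rw [← Finset.card_insert_of_notMem hnm]
        apply Finset.card_le_card
        intro a ha
        rcases Finset.mem_insert.mp ha with h1 | h1
        · subst h1
          exact Finset.mem_filter.mpr ⟨Finset.mem_range.mpr (hcolw i), rfl⟩
        · have := Finset.mem_filter.mp h1
          exact Finset.mem_filter.mpr ⟨this.1, this.2.1⟩
      have hfin : pos (col i) + 1
          ≤ ((Finset.range wbar).filter (fun k' => etype k' < etype (col i))).card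
            + ((Finset.range wbar).filter (fun k' => etype k' = etype (col i))).card := by
        rw [hpossplit]
        omega
      exact_mod_cast hfin
end

section
/- Let R_1,…,R_m be rectangles with positive integer heights h_1,…,h_m and widths w_1,…,w_m, and let C_1,…,C_t be containers with heights H_1,…,H_t and widths W_1,…,W_t. Suppose there is a feasible sliced assignment, i.e., nonnegative integers s_{ij} (1 ≤ i ≤ m, 1 ≤ j ≤ t) with ∑_{j=1}^t s_{ij} = h_i for every i, with w_i ≤ W_j whenever s_{ij} > 0, and with ∑_{i=1}^m s_{ij} ≤ H_j for every j. Then there exist a subset I ⊆ {1,…,m} with |{1,…,m} ∖ I| ≤ t and a map σ : I → {1,…,t} such that w_i ≤ W_{σ(i)} for every i ∈ I and, for every j, ∑_{i ∈ I, σ(i)=j} h_i ≤ H_j. -/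
open scoped Classical

open Finset in
private lemma sliced_loadc_aux {t : ℕ} (js : List (Fin t)) (c : Fin t) :
    (if js.head? = some c then (0:ℕ) else 0) = 0 := by simp

open Finset in
private lemma sliced_G (m t : ℕ)
    (h w : Fin m → ℕ) (hpos : ∀ i, 0 < h i ∧ 0 < w i)
    (Hc Wc : Fin t → ℕ)
    (s : Fin m → Fin t → ℕ)
    (hs1 : ∀ i, ∑ j, s i j = h i)
    (hs2 : ∀ i j, 0 < s i j → w i ≤ Wc j)
    (hs3 : ∀ j, ∑ i, s i j ≤ Hc j) :
    ∀ (is : List (Fin m)) (js : List (Fin t)) (load : ℕ),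
    is.Pairwise (fun a b => w b ≤ w a) →
    js.Pairwise (fun a b => Wc b ≤ Wc a) →
    is.Nodup → js.Nodup →
    (∀ i ∈ is, ∀ i', i' ∉ is → w i ≤ w i') →
    (∀ c ∈ js, ∀ c', c' ∉ js → Wc c ≤ Wc c') →
    (∀ c, js.head? = some c → load ≤ Hc c) →
    (∑ c ∈ univ \ js.toFinset, Hc c) + load + (t - js.length)
        ≤ ∑ i ∈ univ \ is.toFinset, h i →
    ∃ (I : Finset (Fin m)) (σ : Fin m → Fin t),
      I ⊆ is.toFinset ∧
      (is.toFinset \ I).card ≤ js.length ∧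
      (∀ i ∈ I, w i ≤ Wc (σ i)) ∧
      (∀ i ∈ I, σ i ∈ js.toFinset) ∧
      (∀ c, (if js.head? = some c then load else 0)
              + ∑ i ∈ I.filter (fun i => σ i = c), h i ≤ Hc c) := by
  intro is
  induction is with
  | nil =>
    intro js load _ _ _ _ _ _ hload _
    have hσ : Nonempty (Fin m → Fin t) := by
      rcases Nat.eq_zero_or_pos t with ht | ht
      · subst ht
        exact ⟨fun i => False.elim (by
          have := hs1 i
          simp at this
          have := (hpos i).1
          omega)⟩
      · exact ⟨fun _ => ⟨0, ht⟩⟩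
    obtain ⟨σ⟩ := hσ
    refine ⟨∅, σ, by simp, by simp, by simp, by simp, fun c => ?_⟩
    simp only [Finset.filter_empty, Finset.sum_empty, add_zero]
    split
    · exact hload c (by assumption)
    · exact Nat.zero_le _
  | cons i is ih =>
    intro js load hsi hsj hni hnj hW1 hW2 hload hinv
    have hnotmem : i ∉ is := (List.nodup_cons.mp hni).1
    have hsort_head : ∀ b ∈ is, w b ≤ w i := (List.pairwise_cons.mp hsi).1
    have hPreSum : ∑ p ∈ univ \ is.toFinset, h p
        = ∑ p ∈ univ \ (i :: is).toFinset, h p + h i := by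
      have hmem : i ∈ univ \ is.toFinset := by
        simp [hnotmem]
      have : univ \ (i :: is).toFinset = (univ \ is.toFinset).erase i := by
        ext x
        simp [List.toFinset_cons, Finset.mem_erase, and_comm, eq_comm]
        try tauto
      rw [this]
      rw [← Finset.sum_erase_add _ _ hmem]
    -- new width-prefix invariant for the tail
    have hW1' : ∀ a ∈ is, ∀ a', a' ∉ is → w a ≤ w a' := by
      intro a ha a' ha'
      by_cases hc : a' ∈ i :: is
      · have : a' = i := by
          rcases List.mem_cons.mp hc with rfl | hmem
          · rfl
          · exact absurd hmem ha'
        subst this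
        exact hsort_head a ha
      · exact hW1 a (List.mem_cons_of_mem _ ha) a' hc
    cases js with
    | nil =>
      exfalso
      have htot : ∑ p ∈ univ \ (i :: is).toFinset, h p ≤ ∑ c : Fin t, Hc c := by
        calc ∑ p ∈ univ \ (i :: is).toFinset, h p
            ≤ ∑ p : Fin m, h p :=
              Finset.sum_le_sum_of_subset (Finset.subset_univ _)
          _ = ∑ p : Fin m, ∑ c : Fin t, s p c := by
              exact Finset.sum_congr rfl fun p _ => (hs1 p).symm
          _ = ∑ c : Fin t, ∑ p : Fin m, s p c := Finset.sum_comm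
          _ ≤ ∑ c : Fin t, Hc c := Finset.sum_le_sum fun c _ => hs3 c
      simp only [List.toFinset_nil, Finset.sdiff_empty, List.length_nil, Nat.sub_zero] at hinv
      have ht0 : t = 0 := by omega
      subst ht0
      have := hs1 i
      simp at this
      have := (hpos i).1
      omega
    | cons j js =>
      simp only [List.length_cons] at hinv
      have hjnotmem : j ∉ js := (List.nodup_cons.mp hnj).1
      have hsortj_head : ∀ b ∈ js, Wc b ≤ Wc j := (List.pairwise_cons.mp hsj).1
      -- The key width claim: w i ≤ Wc j
      have hwij : w i ≤ Wc j := by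
        by_contra hlt
        push_neg at hlt
        have hCons : ∀ c : Fin t, w i ≤ Wc c → c ∉ (j :: js) := by
          intro c hc hcmem
          rcases List.mem_cons.mp hcmem with rfl | hmem
          · omega
          · have := hsortj_head c hmem; omega
        have hPre : ∑ p ∈ univ \ (i :: is).toFinset, h p
            ≤ ∑ c ∈ univ \ (j :: js).toFinset, Hc c := by
          calc ∑ p ∈ univ \ (i :: is).toFinset, h p
              = ∑ p ∈ univ \ (i :: is).toFinset, ∑ c : Fin t, s p c := by
                exact Finset.sum_congr rfl fun p _ => (hs1 p).symm
            _ = ∑ c : Fin t, ∑ p ∈ univ \ (i :: is).toFinset, s p c := Finset.sum_comm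
            _ = ∑ c ∈ univ \ (j :: js).toFinset, ∑ p ∈ univ \ (i :: is).toFinset, s p c := by
                refine (Finset.sum_subset (Finset.subset_univ _) ?_).symm
                intro c _ hc
                refine Finset.sum_eq_zero fun p hp => ?_
                by_contra hpc
                have hpc' : 0 < s p c := Nat.pos_of_ne_zero hpc
                have hwp : w i ≤ w p := by
                  refine hW1 i List.mem_cons_self p ?_
                  intro hmem
                  exact (Finset.mem_sdiff.mp hp).2 (List.mem_toFinset.mpr hmem)
                have : w i ≤ Wc c := le_trans hwp (hs2 p c hpc')
                have hnotin := hCons c this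
                refine hc (Finset.mem_sdiff.mpr ⟨Finset.mem_univ c, ?_⟩)
                intro hmem'
                exact hnotin (List.mem_toFinset.mp hmem')
            _ ≤ ∑ c ∈ univ \ (j :: js).toFinset, Hc c := by
                refine Finset.sum_le_sum fun c _ => ?_
                exact le_trans (Finset.sum_le_sum_of_subset (Finset.subset_univ _)) (hs3 c)
        have hlen : js.length + 1 ≤ t := by
          have := (j :: js).toFinset.card_le_univ
          rw [List.toFinset_card_of_nodup hnj] at this
          simpa using this
        have hlen2 : t ≤ js.length + 1 := by omega
        have huniv : (j :: js).toFinset = (univ : Finset (Fin t)) := by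
          apply Finset.eq_univ_of_card
          rw [List.toFinset_card_of_nodup hnj]
          simp only [List.length_cons, Fintype.card_fin]
          omega
        have hi_pos : 0 < h i := (hpos i).1
        have : ∃ c, s i c ≠ 0 := by
          by_contra hc
          push_neg at hc
          have := hs1 i
          rw [Finset.sum_eq_zero (fun c _ => hc c)] at this
          omega
        obtain ⟨c, hc⟩ := this
        have hwic : w i ≤ Wc c := hs2 i c (Nat.pos_of_ne_zero hc)
        have : c ∈ (j :: js) := by
          rw [← List.mem_toFinset, huniv]; exact Finset.mem_univ c
        exact hCons c hwic this
      by_cases hfit : load + h i ≤ Hc j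
      · -- rectangle i fits in container j
        obtain ⟨I, σ, hsub, hcard, hwid, hmem, hht⟩ :=
          ih (j :: js) (load + h i) (List.pairwise_cons.mp hsi).2 hsj
            (List.nodup_cons.mp hni).2 hnj hW1' hW2
            (by
              intro c hc
              simp only [List.head?_cons, Option.some.injEq] at hc
              subst hc
              exact hfit)
            (by rw [hPreSum]; simp only [List.length_cons]; omega)
        have hinotI : i ∉ I := fun hmem' => hnotmem (List.mem_toFinset.mp (hsub hmem'))
        refine ⟨insert i I, Function.update σ i j, ?_, ?_, ?_, ?_, ?_⟩
        · simp only [List.toFinset_cons]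
          exact Finset.insert_subset_insert _ hsub
        · refine le_trans (Finset.card_le_card ?_) hcard
          intro x hx
          rw [Finset.mem_sdiff] at hx ⊢
          obtain ⟨hx1, hx2⟩ := hx
          refine ⟨?_, fun hxI => hx2 (Finset.mem_insert_of_mem hxI)⟩
          rcases (by simpa using hx1 : x = i ∨ x ∈ is) with rfl | hxm
          · exact absurd (Finset.mem_insert_self x I) hx2
          · exact List.mem_toFinset.mpr hxm
        · intro i' hi'
          rcases Finset.mem_insert.mp hi' with rfl | hi'
          · rw [Function.update_self]; exact hwij
          · rw [Function.update_of_ne (fun he => hinotI (by rwa [he] at hi'))]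
            exact hwid i' hi'
        · intro i' hi'
          rcases Finset.mem_insert.mp hi' with rfl | hi'
          · rw [Function.update_self]; simp
          · rw [Function.update_of_ne (fun he => hinotI (by rwa [he] at hi'))]
            exact hmem i' hi'
        · intro c
          have hfilter : (insert i I).filter (fun x => Function.update σ i j x = c)
              = if j = c then insert i (I.filter (fun x => σ x = c))
                else I.filter (fun x => σ x = c) := by
            rw [Finset.filter_insert]
            have : I.filter (fun x => Function.update σ i j x = c)
                = I.filter (fun x => σ x = c) := by
              refine Finset.filter_congr fun x hx => ?_
              rw [Function.update_of_ne (fun he => hinotI (by rwa [he] at hx))]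
            rw [this, Function.update_self]
          have hc := hht c
          rw [List.head?_cons] at hc ⊢
          by_cases hjc : j = c
          · subst hjc
            rw [hfilter]
            rw [if_pos rfl]
            rw [if_pos (rfl : j = j)]
            rw [Finset.sum_insert (fun hmem' => hinotI (Finset.mem_filter.mp hmem').1)]
            rw [if_pos (rfl : (some j : Option (Fin t)) = some j)] at hc
            omega
          · have hne : ¬ ((some j : Option (Fin t)) = some c) := by
              simpa using hjc
            rw [hfilter, if_neg hjc]
            rw [if_neg hne] at hc ⊢
            omega
      · -- rectangle i does not fit: discard it, move to next container
        push_neg at hfit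
        have hConsSum : ∑ c ∈ univ \ js.toFinset, Hc c
            = ∑ c ∈ univ \ (j :: js).toFinset, Hc c + Hc j := by
          have hmem : j ∈ univ \ js.toFinset := by simp [hjnotmem]
          have : univ \ (j :: js).toFinset = (univ \ js.toFinset).erase j := by
            ext x
            simp [List.toFinset_cons, Finset.mem_erase, and_comm, eq_comm]
            try tauto
          rw [this]
          rw [← Finset.sum_erase_add _ _ hmem]
        obtain ⟨I, σ, hsub, hcard, hwid, hmem, hht⟩ :=
          ih js 0 (List.pairwise_cons.mp hsi).2 (List.pairwise_cons.mp hsj).2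
            (List.nodup_cons.mp hni).2 (List.nodup_cons.mp hnj).2 hW1'
            (by
              intro c hc c' hc'
              by_cases hcc : c' ∈ j :: js
              · have : c' = j := by
                  rcases List.mem_cons.mp hcc with rfl | hmem'
                  · rfl
                  · exact absurd hmem' hc'
                subst this
                exact hsortj_head c hc
              · exact hW2 c (List.mem_cons_of_mem _ hc) c' hcc)
            (fun c _ => Nat.zero_le _)
            (by
              rw [hPreSum, hConsSum]
              omega)
        refine ⟨I, σ, ?_, ?_, hwid, ?_, ?_⟩
        · exact hsub.trans (by
            rw [List.toFinset_cons]
            exact Finset.subset_insert _ _)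
        · have hinotI : i ∉ I := fun hmem' => hnotmem (List.mem_toFinset.mp (hsub hmem'))
          have hinot : i ∉ is.toFinset := by simp [hnotmem]
          have : (i :: is).toFinset \ I = insert i (is.toFinset \ I) := by
            ext x
            simp only [List.toFinset_cons, Finset.mem_sdiff, Finset.mem_insert]
            constructor
            · rintro ⟨rfl | hx, hxI⟩
              · exact Or.inl rfl
              · exact Or.inr ⟨hx, hxI⟩
            · rintro (rfl | ⟨hx, hxI⟩)
              · exact ⟨Or.inl rfl, hinotI⟩
              · exact ⟨Or.inr hx, hxI⟩
          rw [this, Finset.card_insert_of_notMem (by simp [hinot])]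
          simpa using Nat.add_le_add_right hcard 1
        · intro i' hi'
          have := hmem i' hi'
          simp only [List.toFinset_cons]
          exact Finset.mem_insert_of_mem this
        · intro c
          have hc := hht c
          by_cases hjc : j = c
          · subst hjc
            have hempty : I.filter (fun x => σ x = j) = ∅ := by
              refine Finset.filter_eq_empty_iff.mpr fun x hx => ?_
              intro he
              have := hmem x hx
              rw [he] at this
              exact hjnotmem (List.mem_toFinset.mp this)
            rw [hempty]
            simp only [Finset.sum_empty, add_zero, List.head?_cons, if_pos rfl]
            exact hload j rfl
          · have hne : ¬ ((some j : Option (Fin t)) = some c) := by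
              simpa using hjc
            rw [List.head?_cons, if_neg hne]
            omega

open Finset in
/-- Lemma 4.2 (sliced-to-integral packing): if rectangles `R_1,…,R_m` can be assigned to
containers `C_1,…,C_t` when slicing into unit-height strips is allowed (`s i j` units of
rectangle `i` go to container `j`), then all but at most `t` of the rectangles can be packed
integrally into the same containers. -/
theorem sliced_to_integral_packing
    (m t : ℕ)
    (h w : Fin m → ℕ) (hpos : ∀ i, 0 < h i ∧ 0 < w i)
    (Hc Wc : Fin t → ℕ)
    (s : Fin m → Fin t → ℕ)
    (hs1 : ∀ i, ∑ j, s i j = h i)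
    (hs2 : ∀ i j, 0 < s i j → w i ≤ Wc j)
    (hs3 : ∀ j, ∑ i, s i j ≤ Hc j) :
    ∃ (I : Finset (Fin m)) (σ : Fin m → Fin t),
      (Finset.univ \ I).card ≤ t ∧
      (∀ i ∈ I, w i ≤ Wc (σ i)) ∧
      (∀ j, ∑ i ∈ I.filter (fun i => σ i = j), h i ≤ Hc j) := by
  classical
  haveI h1 : IsTotal (Fin m) (fun a b => w b ≤ w a) := ⟨fun a b => le_total (w b) (w a)⟩
  haveI h2 : IsTrans (Fin m) (fun a b => w b ≤ w a) := ⟨fun a b c hab hbc => le_trans hbc hab⟩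
  haveI h3 : IsTotal (Fin t) (fun a b => Wc b ≤ Wc a) := ⟨fun a b => le_total (Wc b) (Wc a)⟩
  haveI h4 : IsTrans (Fin t) (fun a b => Wc b ≤ Wc a) := ⟨fun a b c hab hbc => le_trans hbc hab⟩
  obtain ⟨L, hLs, hLL⟩ : ∃ L : List (Fin m), L.Pairwise (fun a b => w b ≤ w a) ∧
      List.Perm L Finset.univ.toList :=
    ⟨List.insertionSort _ Finset.univ.toList, List.pairwise_insertionSort _ _,
      List.perm_insertionSort _ _⟩
  obtain ⟨C, hCs, hCC⟩ : ∃ C : List (Fin t), C.Pairwise (fun a b => Wc b ≤ Wc a) ∧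
      List.Perm C Finset.univ.toList :=
    ⟨List.insertionSort _ Finset.univ.toList, List.pairwise_insertionSort _ _,
      List.perm_insertionSort _ _⟩
  have hLfin : L.toFinset = (Finset.univ : Finset (Fin m)) := by
    rw [List.toFinset_eq_of_perm _ _ hLL]; simp
  have hCfin : C.toFinset = (Finset.univ : Finset (Fin t)) := by
    rw [List.toFinset_eq_of_perm _ _ hCC]; simp
  have hClen : C.length = t := by
    rw [hCC.length_eq]; simp
  obtain ⟨I, σ, _, hcard, hwid, _, hht⟩ :=
    sliced_G m t h w hpos Hc Wc s hs1 hs2 hs3 L C 0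
      hLs hCs
      (hLL.nodup_iff.mpr (Finset.nodup_toList _))
      (hCC.nodup_iff.mpr (Finset.nodup_toList _))
      (by intro i _ i' hi'; exact absurd (by rw [← List.mem_toFinset, hLfin]; exact Finset.mem_univ i') hi')
      (by intro c _ c' hc'; exact absurd (by rw [← List.mem_toFinset, hCfin]; exact Finset.mem_univ c') hc')
      (fun c _ => Nat.zero_le _)
      (by rw [hLfin, hCfin, hClen]; simp)
  refine ⟨I, σ, ?_, hwid, ?_⟩
  · rw [← hLfin]; exact hcard.trans_eq hClen
  · intro j
    have := hht j
    split at this <;> omega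
end

section
/- Let W, H be positive integers, let μ_w, μ_h ∈ (0,1), and let B_1,…,B_m be axis-aligned rectangular regions with pairwise disjoint interiors, each contained in [0,W]×[0,H]. Let S be a finite family of rectangles, each of width at most μ_w·W and height at most μ_h·H, and suppose a(S) is at most the total area of B_1,…,B_m. Then there exist a subfamily S' ⊆ S and a feasible packing of S' in which each rectangle of S' lies inside one of the regions B_1,…,B_m and the packed open rectangles are pairwise disjoint, such that a(S ∖ S') ≤ m·(μ_w·μ_h·W·H + μ_h·H·W + μ_w·W·H). -/
open scoped Classical

/-- Two axis-aligned rectangular regions (real coordinates) have disjoint interiors. -/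
def RegionDisjoint (cx cy cw ch cx' cy' cw' ch' : ℝ) : Prop :=
  cx + cw ≤ cx' ∨ cx' + cw' ≤ cx ∨ cy + ch ≤ cy' ∨ cy' + ch' ≤ cy

namespace SmallPack
variable {ι : Type*} (w h : ι → ℝ)

noncomputable def packShelf (a : ℝ) : List ι → ℝ → List (ι × ℝ) × List ι
  | [], _ => ([], [])
  | i :: t, X =>
    if X + w i ≤ a then
      ((i, X) :: (packShelf a t (X + w i)).1, (packShelf a t (X + w i)).2)
    else ([], i :: t)

theorem packShelf_split (a X : ℝ) (L : List ι) :
    ((packShelf w a L X).1.map Prod.fst) ++ (packShelf w a L X).2 = L := by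
  induction L generalizing X with
  | nil => simp [packShelf]
  | cons i t ih => rw [packShelf]; split <;> simp [ih]

theorem packShelf_suffix (a X : ℝ) (L : List ι) : (packShelf w a L X).2 <:+ L :=
  ⟨_, packShelf_split w a X L⟩

theorem packShelf_bounds (a : ℝ) (L : List ι) (X : ℝ) (hw0 : ∀ i ∈ L, 0 ≤ w i) :
    ∀ p ∈ (packShelf w a L X).1, X ≤ p.2 ∧ p.2 + w p.1 ≤ a := by
  induction L generalizing X with
  | nil => simp [packShelf]
  | cons i t ih =>
    rw [packShelf]; split
    next hcond =>
      rintro p hp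
      rcases List.mem_cons.1 hp with rfl | hp
      · exact ⟨le_refl _, hcond⟩
      · have := ih (X + w i) (fun j hj => hw0 j (List.mem_cons_of_mem _ hj)) p hp
        refine ⟨?_, this.2⟩
        have := this.1
        have := hw0 i (List.mem_cons_self)
        linarith
    next => simp

theorem packShelf_pairwise (a : ℝ) (L : List ι) (X : ℝ) (hw0 : ∀ i ∈ L, 0 ≤ w i) :
    List.Pairwise (fun p q => p.2 + w p.1 ≤ q.2) (packShelf w a L X).1 := by
  induction L generalizing X with
  | nil => simp [packShelf]
  | cons i t ih =>
    rw [packShelf]; split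
    next hcond =>
      refine List.Pairwise.cons ?_ (ih (X + w i) (fun j hj => hw0 j (List.mem_cons_of_mem _ hj)))
      intro q hq
      exact (packShelf_bounds w a t (X + w i) (fun j hj => hw0 j (List.mem_cons_of_mem _ hj)) q hq).1
    next => simp

theorem packShelf_width (a : ℝ) (L : List ι) (X : ℝ) {j : ι} {t' : List ι}
    (hr : (packShelf w a L X).2 = j :: t') :
    a - w j < X + (((packShelf w a L X).1.map fun p => w p.1)).sum := by
  induction L generalizing X with
  | nil => simp [packShelf] at hr
  | cons i t ih =>
    rw [packShelf] at hr ⊢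
    split at hr
    next hcond =>
      have := ih (X + w i) hr
      rw [if_pos hcond]
      simp only [List.map_cons, List.sum_cons] at this ⊢
      linarith
    next hcond =>
      obtain ⟨rfl, rfl⟩ : i = j ∧ t = t' := by simpa using hr
      rw [if_neg hcond]
      push_neg at hcond
      simp only [List.map_nil, List.sum_nil]
      linarith

/-- helper: lower bound a sum of areas by total width times a common height lower bound. -/
theorem sum_mul_le (c : ℝ) (l : List (ι × ℝ)) (hc : 0 ≤ c)
    (h1 : ∀ p ∈ l, c ≤ h p.1 ∧ 0 ≤ w p.1) :
    ((l.map fun p => w p.1).sum) * c ≤ (l.map fun p => w p.1 * h p.1).sum := by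
  induction l with
  | nil => simp
  | cons p t ih =>
    simp only [List.map_cons, List.sum_cons]
    have hp := h1 p (List.mem_cons_self)
    have ht := ih (fun q hq => h1 q (List.mem_cons_of_mem _ hq))
    nlinarith [hp.1, hp.2]


noncomputable def packShelves (a b : ℝ) : ℝ → List ι → List (ι × ℝ × ℝ) × List ι
  | _, [] => ([], [])
  | Y, i :: t =>
    if Y + h i ≤ b ∧ w i ≤ a then
      ((i, (0 : ℝ), Y) :: ((packShelf w a t (w i)).1.map (fun p => (p.1, p.2, Y)) ++
        (packShelves a b (Y + h i) (packShelf w a t (w i)).2).1),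
       (packShelves a b (Y + h i) (packShelf w a t (w i)).2).2)
    else ([], i :: t)
termination_by Y L => L.length
decreasing_by
  simp only [List.length_cons]
  exact Nat.lt_succ_of_le ((packShelf_suffix w a (w i) t).length_le)

theorem packShelves_split (a b Y : ℝ) (L : List ι) :
    ((packShelves w h a b Y L).1.map Prod.fst) ++ (packShelves w h a b Y L).2 = L := by
  induction Y, L using SmallPack.packShelves.induct w h a b with
  | case1 Y => simp [packShelves]
  | case2 Y i t hc ih =>
    rw [packShelves]
    simp only [if_pos hc, List.map_cons, List.map_append, List.map_map, List.cons_append,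
      List.append_assoc, ih]
    have : (Prod.fst ∘ fun p : ι × ℝ => (p.1, p.2, Y)) = Prod.fst := rfl
    rw [this, packShelf_split]
  | case3 Y i t hc => rw [packShelves]; simp [hc]

theorem packShelves_suffix (a b Y : ℝ) (L : List ι) : (packShelves w h a b Y L).2 <:+ L :=
  ⟨_, packShelves_split w h a b Y L⟩

theorem packShelves_mem (a b Y : ℝ) (L : List ι) :
    ∀ q ∈ (packShelves w h a b Y L).1, q.1 ∈ L := by
  intro q hq
  have := packShelves_split w h a b Y L
  rw [← this]
  exact List.mem_append_left _ (List.mem_map_of_mem hq)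

theorem packShelves_bounds (a b Y : ℝ) (L : List ι) :
    (∀ i ∈ L, 0 ≤ w i) → (∀ i ∈ L, 0 ≤ h i) → L.Pairwise (fun i j => h j ≤ h i) →
    ∀ q ∈ (packShelves w h a b Y L).1,
      0 ≤ q.2.1 ∧ q.2.1 + w q.1 ≤ a ∧ Y ≤ q.2.2 ∧ q.2.2 + h q.1 ≤ b := by
  induction Y, L using SmallPack.packShelves.induct w h a b with
  | case1 Y => simp [packShelves]
  | case2 Y i t hc ih =>
    intro hw0 hh0 hsort
    have hw0t : ∀ j ∈ t, 0 ≤ w j := fun j hj => hw0 j (List.mem_cons_of_mem _ hj)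
    have hmem2 : ∀ j ∈ (packShelf w a t (w i)).2, j ∈ t :=
      fun j hj => (packShelf_suffix w a (w i) t).subset hj
    have ihh := ih (fun j hj => hw0t j (hmem2 j hj))
      (fun j hj => hh0 j (List.mem_cons_of_mem _ (hmem2 j hj)))
      (List.Pairwise.sublist ((packShelf_suffix w a (w i) t).sublist)
        ((List.pairwise_cons.1 hsort).2))
    rw [packShelves]
    simp only [if_pos hc]
    intro q hq
    rcases List.mem_cons.1 hq with rfl | hq
    · exact ⟨le_refl _, by simpa using hc.2, le_refl _, hc.1⟩
    rcases List.mem_append.1 hq with hq | hq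
    · obtain ⟨p, hp, rfl⟩ := List.mem_map.1 hq
      have hb := packShelf_bounds w a t (w i) hw0t p hp
      have hpt : p.1 ∈ t := by
        have := packShelf_split w a (w i) t
        rw [← this]
        exact List.mem_append_left _ (List.mem_map_of_mem hp)
      have hhp : h p.1 ≤ h i := (List.pairwise_cons.1 hsort).1 p.1 hpt
      have hwi : 0 ≤ w i := hw0 i (List.mem_cons_self)
      exact ⟨by linarith [hb.1], hb.2, le_refl _, by linarith [hc.1]⟩
    · have := ihh q hq
      have hhi : 0 ≤ h i := hh0 i (List.mem_cons_self)
      exact ⟨this.1, this.2.1, by linarith [this.2.2.1], this.2.2.2⟩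
  | case3 Y i t hc => rw [packShelves]; simp [hc]

theorem packShelves_pairwise (a b Y : ℝ) (L : List ι) :
    (∀ i ∈ L, 0 ≤ w i) → (∀ i ∈ L, 0 ≤ h i) → L.Pairwise (fun i j => h j ≤ h i) →
    List.Pairwise (fun p q : ι × ℝ × ℝ => p.2.1 + w p.1 ≤ q.2.1 ∨ p.2.2 + h p.1 ≤ q.2.2)
      (packShelves w h a b Y L).1 := by
  induction Y, L using SmallPack.packShelves.induct w h a b with
  | case1 Y => simp [packShelves]
  | case2 Y i t hc ih =>
    intro hw0 hh0 hsort
    have hw0t : ∀ j ∈ t, 0 ≤ w j := fun j hj => hw0 j (List.mem_cons_of_mem _ hj)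
    have hmem2 : ∀ j ∈ (packShelf w a t (w i)).2, j ∈ t :=
      fun j hj => (packShelf_suffix w a (w i) t).subset hj
    have hw0' : ∀ j ∈ (packShelf w a t (w i)).2, 0 ≤ w j := fun j hj => hw0t j (hmem2 j hj)
    have hh0' : ∀ j ∈ (packShelf w a t (w i)).2, 0 ≤ h j :=
      fun j hj => hh0 j (List.mem_cons_of_mem _ (hmem2 j hj))
    have hsort' : List.Pairwise (fun i j => h j ≤ h i) (packShelf w a t (w i)).2 :=
      List.Pairwise.sublist ((packShelf_suffix w a (w i) t).sublist)
        ((List.pairwise_cons.1 hsort).2)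
    have hrecb := packShelves_bounds w h a b (Y + h i) (packShelf w a t (w i)).2
      hw0' hh0' hsort'
    rw [packShelves]
    simp only [if_pos hc]
    refine List.Pairwise.cons ?_ (List.pairwise_append.2 ⟨?_, ?_, ?_⟩)
    · intro q hq
      rcases List.mem_append.1 hq with hq | hq
      · obtain ⟨p, hp, rfl⟩ := List.mem_map.1 hq
        have hb := packShelf_bounds w a t (w i) hw0t p hp
        exact Or.inl (by simpa using hb.1)
      · exact Or.inr (hrecb q hq).2.2.1
    · rw [List.pairwise_map]
      exact (packShelf_pairwise w a t (w i) hw0t).imp (fun hpq => Or.inl hpq)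
    · exact ih hw0' hh0' hsort'
    · intro p hp q hq
      obtain ⟨p', hp', rfl⟩ := List.mem_map.1 hp
      have hpt : p'.1 ∈ t := by
        have := packShelf_split w a (w i) t
        rw [← this]
        exact List.mem_append_left _ (List.mem_map_of_mem hp')
      have hhp : h p'.1 ≤ h i := (List.pairwise_cons.1 hsort).1 p'.1 hpt
      exact Or.inr (by
        have := (hrecb q hq).2.2.1
        simp only
        linarith)
  | case3 Y i t hc => rw [packShelves]; simp [hc]


theorem packShelves_area (ω : ℝ) (a b Y : ℝ) (L : List ι) :
    (∀ i ∈ L, 0 ≤ w i) → (∀ i ∈ L, 0 ≤ h i) → (∀ i ∈ L, w i ≤ ω) →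
    L.Pairwise (fun i j => h j ≤ h i) →
    ∀ j t₂, L = j :: t₂ → (packShelves w h a b Y L).2 ≠ [] →
    (a - ω) * max (b - Y - h j) 0 ≤
      ((packShelves w h a b Y L).1.map (fun q => w q.1 * h q.1)).sum := by
  induction Y, L using SmallPack.packShelves.induct w h a b with
  | case1 Y => intro _ _ _ _ j t₂ heq; exact absurd heq (by simp)
  | case2 Y i t hc ih =>
    intro hw0 hh0 hωbd hsort j t₂ heq hR
    obtain ⟨rfl, rfl⟩ : i = j ∧ t = t₂ := by simpa using heq
    rw [packShelves] at hR ⊢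
    simp only [if_pos hc] at hR ⊢
    -- abbreviations
    have hw0t : ∀ x ∈ t, 0 ≤ w x := fun x hx => hw0 x (List.mem_cons_of_mem _ hx)
    have hmem2 : ∀ x ∈ (packShelf w a t (w i)).2, x ∈ t :=
      fun x hx => (packShelf_suffix w a (w i) t).subset hx
    have hw0' : ∀ x ∈ (packShelf w a t (w i)).2, 0 ≤ w x := fun x hx => hw0t x (hmem2 x hx)
    have hh0' : ∀ x ∈ (packShelf w a t (w i)).2, 0 ≤ h x :=
      fun x hx => hh0 x (List.mem_cons_of_mem _ (hmem2 x hx))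
    have hωbd' : ∀ x ∈ (packShelf w a t (w i)).2, w x ≤ ω :=
      fun x hx => hωbd x (List.mem_cons_of_mem _ (hmem2 x hx))
    have hsort' : List.Pairwise (fun i j => h j ≤ h i) (packShelf w a t (w i)).2 :=
      List.Pairwise.sublist ((packShelf_suffix w a (w i) t).sublist)
        ((List.pairwise_cons.1 hsort).2)
    have hs2ne : (packShelf w a t (w i)).2 ≠ [] := by
      intro he
      rw [he] at hR
      exact hR (by simp [packShelves])
    obtain ⟨j₂, t₃, hs2⟩ := List.exists_cons_of_ne_nil hs2ne
    have hrec := ih hw0' hh0' hωbd' hsort' j₂ t₃ hs2 hR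
    -- sums
    simp only [List.map_cons, List.map_append, List.map_map, List.sum_cons, List.sum_append]
    have hcomp : ((fun q : ι × ℝ × ℝ => w q.1 * h q.1) ∘ fun p : ι × ℝ => (p.1, p.2, Y)) =
        fun p : ι × ℝ => w p.1 * h p.1 := rfl
    rw [hcomp]
    set S1 := ((packShelf w a t (w i)).1.map fun p : ι × ℝ => w p.1 * h p.1).sum with hS1
    set S2 := ((packShelves w h a b (Y + h i)
      (packShelf w a t (w i)).2).1.map fun q : ι × ℝ × ℝ => w q.1 * h q.1).sum with hS2
    -- nonnegativity of sums
    have hS1nn : 0 ≤ S1 := by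
      apply List.sum_nonneg
      intro x hx
      obtain ⟨p, hp, rfl⟩ := List.mem_map.1 hx
      have hpt : p.1 ∈ t := by
        have := packShelf_split w a (w i) t
        rw [← this]
        exact List.mem_append_left _ (List.mem_map_of_mem hp)
      exact mul_nonneg (hw0t p.1 hpt) (hh0 p.1 (List.mem_cons_of_mem _ hpt))
    have hS2nn : 0 ≤ S2 := by
      apply List.sum_nonneg
      intro x hx
      obtain ⟨q, hq, rfl⟩ := List.mem_map.1 hx
      have hqm := packShelves_mem w h a b (Y + h i) (packShelf w a t (w i)).2 q hq
      exact mul_nonneg (hw0' q.1 hqm) (hh0' q.1 hqm)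
    have hj₂t : j₂ ∈ t := hmem2 j₂ (hs2 ▸ List.mem_cons_self)
    have hhj₂0 : 0 ≤ h j₂ := hh0 j₂ (List.mem_cons_of_mem _ hj₂t)
    have hwj0 : 0 ≤ w i := hw0 i (List.mem_cons_self)
    have hhj0 : 0 ≤ h i := hh0 i (List.mem_cons_self)
    have hji : w i * h i ≥ 0 := mul_nonneg hwj0 hhj0
    rcases le_or_gt (a - ω) 0 with hA | hA
    · have : (a - ω) * max (b - Y - h i) 0 ≤ 0 :=
        mul_nonpos_iff.mpr (Or.inr ⟨hA, le_max_right _ _⟩)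
      have h2 : (a - ω) * max (b - (Y + h i) - h j₂) 0 ≤ 0 :=
        mul_nonpos_iff.mpr (Or.inr ⟨hA, le_max_right _ _⟩)
      linarith
    · -- key1 : (a - ω) * h j₂ ≤ w i * h i + S1
      have hwidth : a - w j₂ < w i + ((packShelf w a t (w i)).1.map fun p => w p.1).sum :=
        packShelf_width w a t (w i) hs2
      have hhj₂j : h j₂ ≤ h i := (List.pairwise_cons.1 hsort).1 j₂ hj₂t
      have hsm : (((packShelf w a t (w i)).1.map fun p => w p.1).sum) * h j₂ ≤ S1 := by
        apply sum_mul_le w h (h j₂) _ hhj₂0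
        intro p hp
        have hpt : p.1 ∈ t := by
          have := packShelf_split w a (w i) t
          rw [← this]
          exact List.mem_append_left _ (List.mem_map_of_mem hp)
        constructor
        · -- h j₂ ≤ h p.1 : p.1 comes before j₂ in sorted t
          have hsplit := packShelf_split w a (w i) t
          have hps : List.Pairwise (fun i j => h j ≤ h i) t := (List.pairwise_cons.1 hsort).2
          rw [← hsplit] at hps
          have := (List.pairwise_append.1 hps).2.2
          exact this p.1 (List.mem_map_of_mem hp) j₂ (hs2 ▸ List.mem_cons_self)
        · exact hw0t p.1 hpt
      have key1 : (a - ω) * h j₂ ≤ w i * h i + S1 := by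
        have k1 : (a - ω) * h j₂ ≤ (w i + ((packShelf w a t (w i)).1.map fun p => w p.1).sum) * h j₂ := by
          apply mul_le_mul_of_nonneg_right _ hhj₂0
          have := hωbd j₂ (List.mem_cons_of_mem _ hj₂t)
          linarith
        have k3 : w i * h j₂ ≤ w i * h i := mul_le_mul_of_nonneg_left hhj₂j hwj0
        nlinarith [hsm]
      have hmax : max (b - Y - h i) 0 ≤ h j₂ + max (b - Y - h i - h j₂) 0 := by
        apply max_le
        · linarith [le_max_left (b - Y - h i - h j₂) (0 : ℝ)]
        · linarith [le_max_right (b - Y - h i - h j₂) (0 : ℝ)]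
      have hrec' : (a - ω) * max (b - Y - h i - h j₂) 0 ≤ S2 := by
        have : b - (Y + h i) - h j₂ = b - Y - h i - h j₂ := by ring
        rw [this] at hrec
        exact hrec
      calc (a - ω) * max (b - Y - h i) 0
          ≤ (a - ω) * (h j₂ + max (b - Y - h i - h j₂) 0) :=
            mul_le_mul_of_nonneg_left hmax hA.le
        _ = (a - ω) * h j₂ + (a - ω) * max (b - Y - h i - h j₂) 0 := by ring
        _ ≤ (w i * h i + S1) + S2 := by linarith
        _ = w i * h i + (S1 + S2) := by ring
  | case3 Y i t hc =>
    intro hw0 hh0 hωbd hsort j t₂ heq hR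
    obtain ⟨rfl, rfl⟩ : i = j ∧ t = t₂ := by simpa using heq
    rw [packShelves]
    simp only [if_neg hc, List.map_nil, List.sum_nil]
    rw [not_and_or] at hc
    rcases hc with hc | hc
    · push_neg at hc
      have : max (b - Y - h i) 0 = 0 := max_eq_right (by linarith)
      rw [this, mul_zero]
    · push_neg at hc
      have : a - ω ≤ 0 := by linarith [hωbd i (List.mem_cons_self)]
      exact mul_nonpos_iff.mpr (Or.inr ⟨this, le_max_right _ _⟩)

theorem packShelves_region (ω η W' H' a b : ℝ) (L : List ι)
    (hw0 : ∀ i ∈ L, 0 ≤ w i) (hh0 : ∀ i ∈ L, 0 ≤ h i)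
    (hωbd : ∀ i ∈ L, w i ≤ ω) (hηbd : ∀ i ∈ L, h i ≤ η)
    (hsort : L.Pairwise (fun i j => h j ≤ h i))
    (hω0 : 0 ≤ ω) (hη0 : 0 ≤ η) (ha0 : 0 ≤ a) (hb0 : 0 ≤ b) (haW : a ≤ W') (hbH : b ≤ H')
    (hR : (packShelves w h a b 0 L).2 ≠ []) :
    a * b - (ω * η + η * W' + ω * H') ≤
      ((packShelves w h a b 0 L).1.map fun q => w q.1 * h q.1).sum := by
  cases L with
  | nil => exact absurd (by simp [packShelves]) hR
  | cons j t₂ =>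
    have harea := packShelves_area w h ω a b 0 _ hw0 hh0 hωbd hsort j t₂ rfl hR
    have hSnn : 0 ≤ ((packShelves w h a b 0 (j :: t₂)).1.map fun q => w q.1 * h q.1).sum := by
      apply List.sum_nonneg
      intro x hx
      obtain ⟨q, hq, rfl⟩ := List.mem_map.1 hx
      have hqm := packShelves_mem w h a b 0 (j :: t₂) q hq
      exact mul_nonneg (hw0 q.1 hqm) (hh0 q.1 hqm)
    have hhj := hηbd j (List.mem_cons_self)
    have hhj0 := hh0 j (List.mem_cons_self)
    have hW0 : 0 ≤ W' := le_trans ha0 haW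
    have hH0 : 0 ≤ H' := le_trans hb0 hbH
    rcases le_or_gt ω a with hωa | hωa
    · rcases le_or_gt η b with hηb | hηb
      · have h1 : b - η ≤ max (b - 0 - h j) 0 :=
          le_trans (by linarith) (le_max_left (b - 0 - h j) 0)
        have h2 : (a - ω) * (b - η) ≤ (a - ω) * max (b - 0 - h j) 0 :=
          mul_le_mul_of_nonneg_left h1 (by linarith)
        nlinarith [mul_le_mul_of_nonneg_right haW hη0, mul_le_mul_of_nonneg_left hbH hω0,
          mul_nonneg hω0 hη0]
      · -- b < η : a*b ≤ η*W'
        nlinarith [mul_le_mul_of_nonneg_left hηb.le ha0, mul_le_mul_of_nonneg_right haW hη0,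
          mul_nonneg hω0 hη0, mul_nonneg hω0 hH0]
    · -- a < ω : a*b ≤ ω*H'
      nlinarith [mul_le_mul_of_nonneg_left hbH ha0, mul_le_mul_of_nonneg_right hωa.le hb0,
        mul_le_mul_of_nonneg_left hbH hω0, mul_nonneg hω0 hη0, mul_nonneg hη0 hW0]


noncomputable def packRegions (bx bY bw bh : ℕ → ℝ) : ℕ → List ι → List (ι × ℝ × ℝ × ℕ) × List ι
  | 0, L => ([], L)
  | (n+1), L =>
    ((packRegions bx bY bw bh n L).1 ++
      ((packShelves w h (bw n) (bh n) 0 (packRegions bx bY bw bh n L).2).1.map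
        (fun q => (q.1, bx n + q.2.1, bY n + q.2.2, n))),
     (packShelves w h (bw n) (bh n) 0 (packRegions bx bY bw bh n L).2).2)

variable (bx bY bw bh : ℕ → ℝ)

theorem packRegions_split (n : ℕ) (L : List ι) :
    ((packRegions w h bx bY bw bh n L).1.map Prod.fst) ++ (packRegions w h bx bY bw bh n L).2 = L := by
  induction n with
  | zero => simp [packRegions]
  | succ n ih =>
    rw [packRegions]
    simp only [List.map_append, List.map_map, List.append_assoc]
    have : (Prod.fst ∘ fun q : ι × ℝ × ℝ => (q.1, bx n + q.2.1, bY n + q.2.2, n)) =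
        Prod.fst := rfl
    rw [this, packShelves_split, ih]

theorem packRegions_suffix (n : ℕ) (L : List ι) :
    (packRegions w h bx bY bw bh n L).2 <:+ L :=
  ⟨_, packRegions_split w h bx bY bw bh n L⟩

theorem packRegions_mem (n : ℕ) (L : List ι) :
    ∀ q ∈ (packRegions w h bx bY bw bh n L).1, q.1 ∈ L := by
  intro q hq
  have := packRegions_split w h bx bY bw bh n L
  rw [← this]
  exact List.mem_append_left _ (List.mem_map_of_mem hq)

theorem packRegions_bounds (n : ℕ) (L : List ι)
    (hw0 : ∀ i ∈ L, 0 ≤ w i) (hh0 : ∀ i ∈ L, 0 ≤ h i)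
    (hsort : L.Pairwise (fun i j => h j ≤ h i)) :
    ∀ q ∈ (packRegions w h bx bY bw bh n L).1,
      q.2.2.2 < n ∧ bx q.2.2.2 ≤ q.2.1 ∧ q.2.1 + w q.1 ≤ bx q.2.2.2 + bw q.2.2.2 ∧
        bY q.2.2.2 ≤ q.2.2.1 ∧ q.2.2.1 + h q.1 ≤ bY q.2.2.2 + bh q.2.2.2 := by
  induction n with
  | zero => simp [packRegions]
  | succ n ih =>
    have hsub : (packRegions w h bx bY bw bh n L).2 <:+ L :=
      packRegions_suffix w h bx bY bw bh n L
    have hw0' : ∀ i ∈ (packRegions w h bx bY bw bh n L).2, 0 ≤ w i :=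
      fun i hi => hw0 i (hsub.subset hi)
    have hh0' : ∀ i ∈ (packRegions w h bx bY bw bh n L).2, 0 ≤ h i :=
      fun i hi => hh0 i (hsub.subset hi)
    have hsort' : List.Pairwise (fun i j => h j ≤ h i) (packRegions w h bx bY bw bh n L).2 :=
      List.Pairwise.sublist hsub.sublist hsort
    rw [packRegions]
    intro q hq
    rcases List.mem_append.1 hq with hq | hq
    · have := ih q hq
      exact ⟨Nat.lt_succ_of_lt this.1, this.2.1, this.2.2.1, this.2.2.2.1, this.2.2.2.2⟩
    · obtain ⟨q', hq', rfl⟩ := List.mem_map.1 hq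
      have hb := packShelves_bounds w h (bw n) (bh n) 0 _ hw0' hh0' hsort' q' hq'
      refine ⟨Nat.lt_succ_self n, ?_, ?_, ?_, ?_⟩ <;> simp only <;> linarith [hb.1, hb.2.1, hb.2.2.1, hb.2.2.2]

theorem packRegions_pairwise (n : ℕ) (L : List ι)
    (hw0 : ∀ i ∈ L, 0 ≤ w i) (hh0 : ∀ i ∈ L, 0 ≤ h i)
    (hsort : L.Pairwise (fun i j => h j ≤ h i))
    (hdisj : ∀ k < n, ∀ k' < n, k ≠ k' →
      RegionDisjoint (bx k) (bY k) (bw k) (bh k) (bx k') (bY k') (bw k') (bh k')) :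
    List.Pairwise (fun p q : ι × ℝ × ℝ × ℕ =>
      RectDisjointR p.2.1 p.2.2.1 (w p.1) (h p.1) q.2.1 q.2.2.1 (w q.1) (h q.1))
      (packRegions w h bx bY bw bh n L).1 := by
  induction n with
  | zero => simp [packRegions]
  | succ n ih =>
    have hsub : (packRegions w h bx bY bw bh n L).2 <:+ L :=
      packRegions_suffix w h bx bY bw bh n L
    have hw0' : ∀ i ∈ (packRegions w h bx bY bw bh n L).2, 0 ≤ w i :=
      fun i hi => hw0 i (hsub.subset hi)
    have hh0' : ∀ i ∈ (packRegions w h bx bY bw bh n L).2, 0 ≤ h i :=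
      fun i hi => hh0 i (hsub.subset hi)
    have hsort' : List.Pairwise (fun i j => h j ≤ h i) (packRegions w h bx bY bw bh n L).2 :=
      List.Pairwise.sublist hsub.sublist hsort
    have hboundsPrev := packRegions_bounds w h bx bY bw bh n L hw0 hh0 hsort
    have hboundsNew := packShelves_bounds w h (bw n) (bh n) 0 _ hw0' hh0' hsort'
    rw [packRegions]
    refine List.pairwise_append.2 ⟨ih (fun k hk k' hk' => hdisj k (Nat.lt_succ_of_lt hk) k' (Nat.lt_succ_of_lt hk')), ?_, ?_⟩
    · rw [List.pairwise_map]
      refine (packShelves_pairwise w h (bw n) (bh n) 0 _ hw0' hh0' hsort').imp ?_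
      intro p q hpq
      rcases hpq with hx | hy
      · exact Or.inl (by simp only; linarith)
      · exact Or.inr (Or.inr (Or.inl (by simp only; linarith)))
    · intro p hp q hq
      obtain ⟨q', hq', rfl⟩ := List.mem_map.1 hq
      have hbp := hboundsPrev p hp
      have hbq := hboundsNew q' hq'
      have hk : p.2.2.2 < n := hbp.1
      have hd := hdisj p.2.2.2 (Nat.lt_succ_of_lt hk) n (Nat.lt_succ_self n)
        (Nat.ne_of_lt hk)
      rcases hd with hd | hd | hd | hd
      · exact Or.inl (by simp only; linarith [hbp.2.2.1, hbq.1])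
      · exact Or.inr (Or.inl (by simp only; linarith [hbp.2.1, hbq.2.1]))
      · exact Or.inr (Or.inr (Or.inl (by simp only; linarith [hbp.2.2.2.2, hbq.2.2.1])))
      · exact Or.inr (Or.inr (Or.inr (by simp only; linarith [hbp.2.2.2.1, hbq.2.2.2]))) 

theorem packRegions_area (ω η W' H' : ℝ) (n : ℕ) (L : List ι)
    (hw0 : ∀ i ∈ L, 0 ≤ w i) (hh0 : ∀ i ∈ L, 0 ≤ h i)
    (hωbd : ∀ i ∈ L, w i ≤ ω) (hηbd : ∀ i ∈ L, h i ≤ η)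
    (hsort : L.Pairwise (fun i j => h j ≤ h i))
    (hω0 : 0 ≤ ω) (hη0 : 0 ≤ η)
    (hreg : ∀ k < n, 0 ≤ bw k ∧ bw k ≤ W' ∧ 0 ≤ bh k ∧ bh k ≤ H')
    (hR : (packRegions w h bx bY bw bh n L).2 ≠ []) :
    (∑ k ∈ Finset.range n, bw k * bh k) - n * (ω * η + η * W' + ω * H') ≤
      ((packRegions w h bx bY bw bh n L).1.map fun q => w q.1 * h q.1).sum := by
  induction n with
  | zero => simp [packRegions]
  | succ n ih =>
    have hsub : (packRegions w h bx bY bw bh n L).2 <:+ L :=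
      packRegions_suffix w h bx bY bw bh n L
    have hw0' : ∀ i ∈ (packRegions w h bx bY bw bh n L).2, 0 ≤ w i :=
      fun i hi => hw0 i (hsub.subset hi)
    have hh0' : ∀ i ∈ (packRegions w h bx bY bw bh n L).2, 0 ≤ h i :=
      fun i hi => hh0 i (hsub.subset hi)
    have hωbd' : ∀ i ∈ (packRegions w h bx bY bw bh n L).2, w i ≤ ω :=
      fun i hi => hωbd i (hsub.subset hi)
    have hηbd' : ∀ i ∈ (packRegions w h bx bY bw bh n L).2, h i ≤ η :=
      fun i hi => hηbd i (hsub.subset hi)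
    have hsort' : List.Pairwise (fun i j => h j ≤ h i) (packRegions w h bx bY bw bh n L).2 :=
      List.Pairwise.sublist hsub.sublist hsort
    rw [packRegions] at hR ⊢
    simp only at hR
    have hprev : (packRegions w h bx bY bw bh n L).2 ≠ [] := by
      intro he
      rw [he] at hR
      exact hR (by simp [packShelves])
    obtain ⟨h1, h2, h3, h4⟩ := hreg n (Nat.lt_succ_self n)
    have hregion := packShelves_region w h ω η W' H' (bw n) (bh n)
      (packRegions w h bx bY bw bh n L).2 hw0' hh0' hωbd' hηbd' hsort'
      hω0 hη0 h1 h3 h2 h4 hR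
    have hreg' : ∀ k < n, 0 ≤ bw k ∧ bw k ≤ W' ∧ 0 ≤ bh k ∧ bh k ≤ H' :=
      fun k hk => hreg k (Nat.lt_succ_of_lt hk)
    have hRn := ih hreg' hprev
    rw [Finset.sum_range_succ]
    simp only [List.map_append, List.sum_append, List.map_map]
    have hcomp : ((fun q : ι × ℝ × ℝ × ℕ => w q.1 * h q.1) ∘
        fun q : ι × ℝ × ℝ => (q.1, bx n + q.2.1, bY n + q.2.2, n)) =
        fun q : ι × ℝ × ℝ => w q.1 * h q.1 := rfl
    rw [hcomp]
    push_cast [Nat.cast_succ]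
    nlinarith [hRn, hregion]

end SmallPack

/-- Packing the small rectangles (core of Lemma 6.1): given rectangular regions
`B_1,…,B_m` with pairwise disjoint interiors inside `[0,W]×[0,H]` and a family `S` of
small rectangles (width at most `μ_w·W`, height at most `μ_h·H`) of total area at most the
total area of the regions, a subfamily `S'` of `S` can be feasibly packed inside the
regions so that the unpacked area satisfies
`a(S ∖ S') ≤ m·(μ_w·μ_h·W·H + μ_h·H·W + μ_w·W·H)`. -/
theorem small_rectangles_packing
    (W H : ℕ) (hW : 0 < W) (hH : 0 < H)
    (μw μh : ℝ) (hμw : μw ∈ Set.Ioo (0 : ℝ) 1) (hμh : μh ∈ Set.Ioo (0 : ℝ) 1)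
    (m : ℕ) (bx bY bw bh : ℕ → ℝ)
    (hreg : ∀ k < m, 0 ≤ bx k ∧ 0 ≤ bY k ∧ 0 ≤ bw k ∧ 0 ≤ bh k ∧
      bx k + bw k ≤ W ∧ bY k + bh k ≤ H)
    (hdisj : ∀ k < m, ∀ k' < m, k ≠ k' →
      RegionDisjoint (bx k) (bY k) (bw k) (bh k) (bx k') (bY k') (bw k') (bh k'))
    (ι : Type*) [Fintype ι] (w h : ι → ℕ) (hpos : ∀ i, 0 < w i ∧ 0 < h i)
    (hsmall : ∀ i, (w i : ℝ) ≤ μw * W ∧ (h i : ℝ) ≤ μh * H)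
    (harea : (∑ i, (w i : ℝ) * h i) ≤ ∑ k ∈ Finset.range m, bw k * bh k) :
    ∃ (S : Finset ι) (x y : ι → ℝ) (c : ι → ℕ),
      (∀ i ∈ S, c i < m ∧
        bx (c i) ≤ x i ∧ x i + w i ≤ bx (c i) + bw (c i) ∧
        bY (c i) ≤ y i ∧ y i + h i ≤ bY (c i) + bh (c i)) ∧
      (∀ i ∈ S, ∀ j ∈ S, i ≠ j →
        RectDisjointR (x i) (y i) (w i) (h i) (x j) (y j) (w j) (h j)) ∧
      (∑ i ∈ Finset.univ \ S, (w i : ℝ) * h i) ≤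
        m * (μw * μh * W * H + μh * H * W + μw * W * H) := by
  classical
  obtain ⟨hμw0, hμw1⟩ := hμw
  obtain ⟨hμh0, hμh1⟩ := hμh
  have hW0 : (0 : ℝ) ≤ W := Nat.cast_nonneg W
  have hH0 : (0 : ℝ) ≤ H := Nat.cast_nonneg H
  have hω0 : (0 : ℝ) ≤ μw * W := mul_nonneg hμw0.le hW0
  have hη0 : (0 : ℝ) ≤ μh * H := mul_nonneg hμh0.le hH0
  -- nonnegativity of the right-hand side bound
  have hRHS0 : (0 : ℝ) ≤ m * (μw * μh * W * H + μh * H * W + μw * W * H) := by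
    have h1 : (0:ℝ) ≤ μw * μh * W * H :=
      mul_nonneg (mul_nonneg (mul_nonneg hμw0.le hμh0.le) hW0) hH0
    have h2 : (0:ℝ) ≤ μh * H * W := mul_nonneg hη0 hW0
    have h3 : (0:ℝ) ≤ μw * W * H := mul_nonneg hω0 hH0
    exact mul_nonneg (Nat.cast_nonneg m) (by linarith)
  set w' : ι → ℝ := fun i => (w i : ℝ) with hw'
  set h' : ι → ℝ := fun i => (h i : ℝ) with hh'
  set r : ι → ι → Prop := fun i j => h' j ≤ h' i with hrdef
  haveI hdr : DecidableRel r := fun i j => Real.decidableLE _ _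
  haveI : IsTotal ι r := ⟨fun a b => le_total (h' b) (h' a)⟩
  haveI : IsTrans ι r := ⟨fun a b c h1 h2 => le_trans h2 h1⟩
  set L₀ : List ι := List.insertionSort r Finset.univ.toList with hL₀
  have hperm : L₀.Perm Finset.univ.toList := List.perm_insertionSort r _
  have hnodup : L₀.Nodup := hperm.nodup_iff.2 Finset.univ.nodup_toList
  have hsort : L₀.Pairwise (fun i j => h' j ≤ h' i) := List.pairwise_insertionSort r _
  have hw0 : ∀ i ∈ L₀, 0 ≤ w' i := fun i _ => Nat.cast_nonneg _
  have hh0 : ∀ i ∈ L₀, 0 ≤ h' i := fun i _ => Nat.cast_nonneg _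
  have hωbd : ∀ i ∈ L₀, w' i ≤ μw * W := fun i _ => (hsmall i).1
  have hηbd : ∀ i ∈ L₀, h' i ≤ μh * H := fun i _ => (hsmall i).2
  set P := (SmallPack.packRegions w' h' bx bY bw bh m L₀).1 with hPdef
  set R := (SmallPack.packRegions w' h' bx bY bw bh m L₀).2 with hRdef
  have hsplit : P.map Prod.fst ++ R = L₀ :=
    SmallPack.packRegions_split w' h' bx bY bw bh m L₀
  set S : Finset ι := (P.map Prod.fst).toFinset with hSdef
  have hmemS : ∀ i, i ∈ S ↔ ∃ q ∈ P, q.1 = i := by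
    intro i
    simp [hSdef, List.mem_map]
  set e : ι → ι × ℝ × ℝ × ℕ :=
    fun i => if hx : ∃ q ∈ P, q.1 = i then hx.choose else (i, 0, 0, 0) with hedef
  have hespec : ∀ i ∈ S, e i ∈ P ∧ (e i).1 = i := by
    intro i hi
    have hx : ∃ q ∈ P, q.1 = i := (hmemS i).1 hi
    rw [hedef]
    simp only [dif_pos hx]
    exact ⟨hx.choose_spec.1, hx.choose_spec.2⟩
  refine ⟨S, fun i => (e i).2.1, fun i => (e i).2.2.1, fun i => (e i).2.2.2, ?_, ?_, ?_⟩
  · -- containment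
    intro i hi
    obtain ⟨heP, hefst⟩ := hespec i hi
    have hb := SmallPack.packRegions_bounds w' h' bx bY bw bh m L₀ hw0 hh0 hsort (e i) heP
    rw [hefst] at hb
    exact ⟨hb.1, hb.2.1, hb.2.2.1, hb.2.2.2.1, hb.2.2.2.2⟩
  · -- disjointness
    intro i hi j hj hij
    obtain ⟨hePi, hei⟩ := hespec i hi
    obtain ⟨hePj, hej⟩ := hespec j hj
    have hpw := SmallPack.packRegions_pairwise w' h' bx bY bw bh m L₀ hw0 hh0 hsort hdisj
    have hsymm : Symmetric (fun p q : ι × ℝ × ℝ × ℕ =>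
        RectDisjointR p.2.1 p.2.2.1 (w' p.1) (h' p.1) q.2.1 q.2.2.1 (w' q.1) (h' q.1)) := by
      intro p q hpq
      unfold RectDisjointR at *
      tauto
    have hne : e i ≠ e j := fun hc => hij (by rw [← hei, ← hej, hc])
    have := (letI : Std.Symm (fun p q : ι × ℝ × ℝ × ℕ =>
          RectDisjointR p.2.1 p.2.2.1 (w' p.1) (h' p.1) q.2.1 q.2.2.1 (w' q.1) (h' q.1)) :=
        ⟨fun _ _ hpq => hsymm hpq⟩; hpw.forall hePi hePj hne)
    rw [hei, hej] at this
    exact this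
  · -- area bound
    have hf : ∀ i : ι, (w i : ℝ) * (h i : ℝ) = w' i * h' i := fun i => rfl
    rcases eq_or_ne R [] with hRnil | hRne
    · -- everything is packed
      have : P.map Prod.fst = L₀ := by rw [← hsplit, hRnil, List.append_nil]
      have hSu : S = Finset.univ := by
        rw [hSdef, this]
        rw [List.toFinset_eq_of_perm _ _ hperm, Finset.toList_toFinset]
      rw [hSu]
      simpa using hRHS0
    · have hareaP := SmallPack.packRegions_area w' h' bx bY bw bh (μw * W) (μh * H)
        (W : ℝ) (H : ℝ) m L₀ hw0 hh0 hωbd hηbd hsort hω0 hη0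
        (fun k hk => by
          obtain ⟨h1, h2, h3, h4, h5, h6⟩ := hreg k hk
          exact ⟨h3, by linarith, h4, by linarith⟩) hRne
      -- sums bookkeeping
      have hRnodup : R.Nodup := by
        rw [← hsplit] at hnodup
        exact (List.nodup_append.1 hnodup).2.1
      have hSd : Finset.univ \ S = R.toFinset := by
        ext i
        simp only [Finset.mem_sdiff, Finset.mem_univ, true_and, hSdef, List.mem_toFinset]
        constructor
        · intro hiP
          have hiL : i ∈ L₀ := hperm.mem_iff.2 (Finset.mem_toList.2 (Finset.mem_univ i))
          rw [← hsplit] at hiL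
          exact (List.mem_append.1 hiL).resolve_left hiP
        · intro hiR hiP
          rw [← hsplit] at hnodup
          exact (List.nodup_append.1 hnodup).2.2 i hiP i hiR rfl
      have hsum1 : (∑ i ∈ Finset.univ \ S, (w i : ℝ) * h i) =
          (R.map fun i => w' i * h' i).sum := by
        rw [hSd, List.sum_toFinset _ hRnodup]
      have hsum2 : (∑ i : ι, (w i : ℝ) * h i) = (L₀.map fun i => w' i * h' i).sum := by
        have h1 := (hperm.map (fun i => w' i * h' i)).sum_eq
        rw [h1, ← List.sum_toFinset _ Finset.univ.nodup_toList, Finset.toList_toFinset]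
      have hsum3 : (L₀.map fun i => w' i * h' i).sum =
          (P.map fun q => w' q.1 * h' q.1).sum + (R.map fun i => w' i * h' i).sum := by
        rw [← hsplit, List.map_append, List.sum_append, List.map_map]
        rfl
      rw [hsum1]
      rw [hsum2, hsum3] at harea
      have hring : (m : ℝ) * ((μw * W) * (μh * H) + (μh * H) * W + (μw * W) * H) =
          m * (μw * μh * W * H + μh * H * W + μw * W * H) := by ring
      rw [hring] at hareaP
      linarith
end
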